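/- arXiv:2305.02735 — 4 statements merged into one kernel-verified Lean document; each statement's English description precedes it below -/
import Mathlib

section
/- For every positive integer Δ and every integer s > 2, if N_s denotes the number of 2-cyclotomic cosets modulo 2^Δ−1 of size exactly s, then 3 divides N_s·s. -/
/-- The 2-cyclotomic coset of `a` modulo `n`: the orbit of `a` under multiplication by 2. -/
def cycCoset (n : ℕ) (a : ZMod n) : Set (ZMod n) := {x | ∃ j : ℕ, x = 2 ^ j * a}

/-- The number of 2-cyclotomic cosets modulo `n` of size exactly `s`. -/
noncomputable def Ncos (n s : ℕ) : ℕ :=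
  {C : Set (ZMod n) | (∃ a : ZMod n, C = cycCoset n a) ∧ C.ncard = s}.ncard

namespace ThreeDvd

noncomputable def per (n : ℕ) (a : ZMod n) : ℕ := sInf {j | 0 < j ∧ 2 ^ j * a = a}

variable {n Δ : ℕ}

lemma per_pos (hΔ : 0 < Δ) (hpow : (2:ZMod n)^Δ = 1) (a : ZMod n) :
    0 < per n a ∧ 2 ^ per n a * a = a := by
  have hmem : Δ ∈ {j | 0 < j ∧ 2 ^ j * a = a} := ⟨hΔ, by rw [hpow, one_mul]⟩
  exact Nat.sInf_mem ⟨Δ, hmem⟩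

lemma per_dvd_iff (hΔ : 0 < Δ) (hpow : (2:ZMod n)^Δ = 1) (a : ZMod n) (j : ℕ) :
    2 ^ j * a = a ↔ per n a ∣ j := by
  obtain ⟨hp, heq⟩ := per_pos hΔ hpow a
  have key : ∀ k, 2 ^ (per n a * k) * a = a := by
    intro k
    induction k with
    | zero => simp
    | succ k ih => rw [Nat.mul_succ, pow_add, mul_assoc, heq, ih]
  constructor
  · intro h
    have hj : 2 ^ (j % per n a) * a = a := by
      calc 2 ^ (j % per n a) * a
          = 2 ^ (j % per n a) * (2 ^ (per n a * (j / per n a)) * a) := by rw [key]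
        _ = 2 ^ (j % per n a + per n a * (j / per n a)) * a := by rw [← mul_assoc, ← pow_add]
        _ = a := by rw [Nat.mod_add_div]; exact h
    by_contra hcon
    have hr : j % per n a ≠ 0 := fun h0 => hcon (Nat.dvd_of_mod_eq_zero h0)
    have hmem : j % per n a ∈ {j | 0 < j ∧ 2 ^ j * a = a} := ⟨Nat.pos_of_ne_zero hr, hj⟩
    exact absurd (Nat.sInf_le hmem) (not_le.mpr (Nat.mod_lt _ hp))
  · rintro ⟨k, rfl⟩
    exact key k

lemma per_dvd (hΔ : 0 < Δ) (hpow : (2:ZMod n)^Δ = 1) (a : ZMod n) : per n a ∣ Δ :=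
  (per_dvd_iff hΔ hpow a Δ).mp (by rw [hpow, one_mul])

lemma pow_mod_per (hΔ : 0 < Δ) (hpow : (2:ZMod n)^Δ = 1) (a : ZMod n) (j : ℕ) :
    2 ^ j * a = 2 ^ (j % per n a) * a := by
  obtain ⟨hp, heq⟩ := per_pos hΔ hpow a
  have key : 2 ^ (per n a * (j / per n a)) * a = a :=
    (per_dvd_iff hΔ hpow a _).mpr ⟨_, rfl⟩
  calc 2 ^ j * a = 2 ^ (j % per n a + per n a * (j / per n a)) * a := by rw [Nat.mod_add_div]
    _ = 2 ^ (j % per n a) * (2 ^ (per n a * (j / per n a)) * a) := by rw [pow_add, mul_assoc]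
    _ = 2 ^ (j % per n a) * a := by rw [key]

lemma coset_finset (hΔ : 0 < Δ) (hpow : (2:ZMod n)^Δ = 1) (a : ZMod n) :
    cycCoset n a = ↑((Finset.range (per n a)).image fun j => (2:ZMod n) ^ j * a) := by
  ext x
  simp only [cycCoset, Set.mem_setOf_eq, Finset.coe_image, Set.mem_image, Finset.mem_coe,
    Finset.mem_range]
  constructor
  · rintro ⟨j, rfl⟩
    exact ⟨j % per n a, Nat.mod_lt _ (per_pos hΔ hpow a).1, (pow_mod_per hΔ hpow a j).symm⟩
  · rintro ⟨j, _, rfl⟩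
    exact ⟨j, rfl⟩

lemma orbit_injOn (hΔ : 0 < Δ) (hpow : (2:ZMod n)^Δ = 1) (hunit : IsUnit (2:ZMod n))
    (a : ZMod n) : Set.InjOn (fun j => (2:ZMod n) ^ j * a) ↑(Finset.range (per n a)) := by
  have key : ∀ i j : ℕ, i ≤ j → j < per n a → 2 ^ i * a = 2 ^ j * a → i = j := by
    intro i j hij hj h
    have h2 : 2 ^ i * a = 2 ^ i * (2 ^ (j - i) * a) := by
      rw [← mul_assoc, ← pow_add, Nat.add_sub_cancel' hij]; exact h
    have h3 : 2 ^ (j - i) * a = a := ((hunit.pow i).mul_left_cancel h2.symm)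
    have h4 := (per_dvd_iff hΔ hpow a _).mp h3
    have h5 : j - i = 0 := by
      rcases Nat.eq_zero_or_pos (j - i) with h | h
      · exact h
      · exact absurd (Nat.le_of_dvd h h4) (by omega)
    omega
  intro i hi j hj h
  simp only [Finset.coe_range, Set.mem_Iio] at hi hj
  rcases le_total i j with hij | hij
  · exact key i j hij hj h
  · exact (key j i hij hi h.symm).symm

lemma ncard_coset (hΔ : 0 < Δ) (hpow : (2:ZMod n)^Δ = 1) (hunit : IsUnit (2:ZMod n))
    (a : ZMod n) : (cycCoset n a).ncard = per n a := by
  rw [coset_finset hΔ hpow a, Set.ncard_coe_finset,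
    Finset.card_image_of_injOn (orbit_injOn hΔ hpow hunit a), Finset.card_range]

lemma mem_coset_self (a : ZMod n) : a ∈ cycCoset n a := ⟨0, by simp⟩

lemma coset_eq_of_mem (hΔ : 0 < Δ) (hpow : (2:ZMod n)^Δ = 1) {a b : ZMod n}
    (hb : b ∈ cycCoset n a) : cycCoset n b = cycCoset n a := by
  obtain ⟨i, rfl⟩ := hb
  ext x
  constructor
  · rintro ⟨j, rfl⟩
    exact ⟨j + i, by rw [pow_add, mul_assoc]⟩
  · rintro ⟨j, rfl⟩
    have ha : a = 2 ^ (Δ * i - i) * (2 ^ i * a) := by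
      rw [← mul_assoc, ← pow_add, Nat.sub_add_cancel (Nat.le_mul_of_pos_left i hΔ),
        pow_mul, hpow, one_pow, one_mul]
    exact ⟨j + (Δ * i - i), by rw [pow_add, mul_assoc, ← ha]⟩




lemma card_ker [NeZero n] {k : ℕ} (hk : 0 < k) (hkn : k ∣ n) :
    (Finset.univ.filter fun a : ZMod n => (k : ZMod n) * a = 0).card = k := by
  obtain ⟨m, hm⟩ := hkn
  have hn : 0 < n := Nat.pos_of_ne_zero (NeZero.ne n)
  have hmpos : 0 < m := by
    rcases Nat.eq_zero_or_pos m with h | h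
    · rw [h, Nat.mul_zero] at hm; omega
    · exact h
  have himg : (Finset.univ.filter fun a : ZMod n => (k : ZMod n) * a = 0)
      = (Finset.range k).image (fun i => ((i * m : ℕ) : ZMod n)) := by
    ext a
    simp only [Finset.mem_filter, Finset.mem_univ, true_and, Finset.mem_image, Finset.mem_range]
    constructor
    · intro h
      have hv : ((k * a.val : ℕ) : ZMod n) = 0 := by
        push_cast [ZMod.natCast_zmod_val]
        exact h
      have hdvd : n ∣ k * a.val := (ZMod.natCast_eq_zero_iff _ _).mp hv
      have hdvd2 : k * m ∣ k * a.val := by rw [← hm]; exact hdvd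
      have hmd : m ∣ a.val := (mul_dvd_mul_iff_left hk.ne').mp hdvd2
      obtain ⟨i, hi⟩ := hmd
      have hvlt : a.val < n := a.val_lt
      refine ⟨i, ?_, ?_⟩
      · have : m * i < k * m := by rw [← hi, ← hm]; exact hvlt
        nlinarith
      · rw [mul_comm i m, ← hi, ZMod.natCast_zmod_val]
    · rintro ⟨i, hik, rfl⟩
      have h0 : ((k * (i * m) : ℕ) : ZMod n) = 0 := by
        rw [ZMod.natCast_eq_zero_iff, hm]
        exact ⟨i, by ring⟩
      calc (k : ZMod n) * ((i * m : ℕ) : ZMod n) = ((k * (i * m) : ℕ) : ZMod n) := by push_cast; ring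
        _ = 0 := h0
  rw [himg, Finset.card_image_of_injOn, Finset.card_range]
  intro i hi j hj hij
  simp only [Finset.coe_range, Set.mem_Iio] at hi hj
  have h1 : i * m < n := by rw [hm]; exact (Nat.mul_lt_mul_right hmpos).mpr hi
  have h2 : j * m < n := by rw [hm]; exact (Nat.mul_lt_mul_right hmpos).mpr hj
  have := congrArg ZMod.val hij
  rw [ZMod.val_cast_of_lt h1, ZMod.val_cast_of_lt h2] at this
  exact Nat.eq_of_mul_eq_mul_right hmpos this

lemma card_fixed {Δ : ℕ} [NeZero n] (hn : n = 2 ^ Δ - 1) {d : ℕ} (hd : 0 < d)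
    (hdΔ : d ∣ Δ) :
    (Finset.univ.filter fun a : ZMod n => 2 ^ d * a = a).card = 2 ^ d - 1 := by
  have hkn : 2 ^ d - 1 ∣ n := by
    rw [hn]
    obtain ⟨e, he⟩ := hdΔ
    have := Nat.sub_dvd_pow_sub_pow (2 ^ d) 1 e
    rwa [← pow_mul, ← he, one_pow] at this
  have hkpos : 0 < 2 ^ d - 1 := by
    have : 2 ≤ 2 ^ d := by calc 2 = 2 ^ 1 := rfl
      _ ≤ 2 ^ d := Nat.pow_le_pow_right (by norm_num) hd
    omega
  have hcond : ∀ a : ZMod n, (2 ^ d * a = a) ↔ (((2 ^ d - 1 : ℕ) : ZMod n) * a = 0) := by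
    intro a
    have h1 : ((2 ^ d - 1 : ℕ) : ZMod n) = 2 ^ d - 1 := by
      push_cast [Nat.one_le_two_pow]
      ring
    rw [h1, sub_mul, one_mul, sub_eq_zero]
  simp_rw [hcond]
  exact card_ker hkpos hkn


lemma fixed_eq_sum [NeZero n] (hΔ : 0 < Δ) (hpow : (2:ZMod n)^Δ = 1) {d : ℕ} (hd : 0 < d) :
    (Finset.univ.filter fun a : ZMod n => 2 ^ d * a = a).card
      = ∑ e ∈ d.divisors, (Finset.univ.filter fun a : ZMod n => per n a = e).card := by
  classical
  rw [Finset.card_eq_sum_card_fiberwise (f := per n) (t := d.divisors)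
    (fun a ha => Nat.mem_divisors.mpr
      ⟨(per_dvd_iff hΔ hpow a d).mp (Finset.mem_filter.mp ha).2, hd.ne'⟩)]
  refine Finset.sum_congr rfl fun e he => ?_
  congr 1
  ext a
  simp only [Finset.mem_filter, Finset.mem_univ, true_and, and_iff_right_iff_imp]
  intro hpa
  rw [per_dvd_iff hΔ hpow a d, hpa]
  exact Nat.dvd_of_mem_divisors he

lemma card_per_eq [NeZero n] (hΔ : 0 < Δ) (hpow : (2:ZMod n)^Δ = 1)
    (hunit : IsUnit (2:ZMod n)) (s : ℕ) :
    (Finset.univ.filter fun a : ZMod n => per n a = s).card = Ncos n s * s := by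
  classical
  set T := Finset.univ.filter fun a : ZMod n => per n a = s with hT
  have himage : {C : Set (ZMod n) | (∃ a, C = cycCoset n a) ∧ C.ncard = s}
      = ↑(T.image fun a => cycCoset n a) := by
    ext C
    simp only [Set.mem_setOf_eq, Finset.coe_image, Set.mem_image, Finset.mem_coe, hT,
      Finset.mem_filter, Finset.mem_univ, true_and]
    constructor
    · rintro ⟨⟨a, rfl⟩, hC⟩
      exact ⟨a, by rw [← ncard_coset hΔ hpow hunit a]; exact hC, rfl⟩
    · rintro ⟨a, ha, rfl⟩
      exact ⟨⟨a, rfl⟩, by rw [ncard_coset hΔ hpow hunit a]; exact ha⟩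
  rw [Ncos, himage, Set.ncard_coe_finset]
  have hfib : ∀ C ∈ T.image fun a => cycCoset n a,
      (T.filter fun a => cycCoset n a = C).card = s := by
    intro C hC
    obtain ⟨b, hb, rfl⟩ := Finset.mem_image.mp hC
    rw [hT, Finset.mem_filter] at hb
    have hseteq : ↑(T.filter fun a => cycCoset n a = cycCoset n b) = cycCoset n b := by
      ext x
      simp only [Finset.coe_filter, Set.mem_setOf_eq, hT, Finset.mem_filter, Finset.mem_univ,
        true_and]
      constructor
      · rintro ⟨-, hx⟩
        rw [← hx]
        exact mem_coset_self x
      · intro hx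
        have hcc := coset_eq_of_mem hΔ hpow hx
        refine ⟨?_, hcc⟩
        rw [← ncard_coset hΔ hpow hunit x, hcc, ncard_coset hΔ hpow hunit b, hb.2]
    have := congrArg Set.ncard hseteq
    rw [Set.ncard_coe_finset, ncard_coset hΔ hpow hunit b, hb.2] at this
    exact this
  calc T.card = ∑ C ∈ T.image fun a => cycCoset n a,
        (T.filter fun a => cycCoset n a = C).card :=
      Finset.card_eq_sum_card_image _ _
    _ = ∑ _C ∈ T.image fun a => cycCoset n a, s := Finset.sum_congr rfl hfib
    _ = (T.image fun a => cycCoset n a).card * s := by rw [Finset.sum_const, smul_eq_mul]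

lemma two_pow_mod_three {y : ℕ} (hy : 0 < y) :
    ((2 ^ y - 1 : ℕ) : ZMod 3) = if Odd y then 1 else 0 := by
  have h1 : ((2 ^ y - 1 : ℕ) : ZMod 3) = (2 : ZMod 3) ^ y - 1 := by
    push_cast [Nat.one_le_two_pow]
    ring
  have h2 : (2 : ZMod 3) = -1 := by decide
  rw [h1, h2]
  rcases Nat.even_or_odd y with h | h
  · rw [h.neg_one_pow, if_neg (Nat.not_odd_iff_even.mpr h)]
    ring
  · rw [h.neg_one_pow, if_pos h]
    decide

lemma c_sum (d : ℕ) (hd : 0 < d) :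
    (∑ i ∈ d.divisors, ((if i = 1 then 1 else 0) + (if i = 2 then -1 else 0) : ZMod 3))
      = if Odd d then 1 else 0 := by
  rw [Finset.sum_add_distrib, Finset.sum_ite_eq' d.divisors 1 (fun _ => (1 : ZMod 3)),
    Finset.sum_ite_eq' d.divisors 2 (fun _ => (-1 : ZMod 3))]
  rw [if_pos (Nat.one_mem_divisors.mpr hd.ne')]
  rcases Nat.even_or_odd d with h | h
  · rw [if_pos (Nat.mem_divisors.mpr ⟨h.two_dvd, hd.ne'⟩),
      if_neg (Nat.not_odd_iff_even.mpr h)]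
    ring
  · have h2d : ¬ 2 ∣ d := by obtain ⟨k, hk⟩ := h; omega
    rw [if_neg fun hc => h2d (Nat.mem_divisors.mp hc).1, if_pos h]
    ring

end ThreeDvd

open ThreeDvd in
theorem three_dvd_Ncos_mul (Δ s : ℕ) (hΔ : 0 < Δ) (hs : 2 < s) :
    3 ∣ Ncos (2 ^ Δ - 1) s * s := by
  classical
  set n := 2 ^ Δ - 1 with hn
  have h2Δ : 2 ≤ 2 ^ Δ := by
    calc 2 = 2 ^ 1 := rfl
      _ ≤ 2 ^ Δ := Nat.pow_le_pow_right (by norm_num) hΔ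
  haveI : NeZero n := ⟨by omega⟩
  have hpow : (2 : ZMod n) ^ Δ = 1 := by
    have h1 : ((2 ^ Δ : ℕ) : ZMod n) = (2 : ZMod n) ^ Δ := by push_cast; ring
    have h2 : (2 ^ Δ : ℕ) = n + 1 := by omega
    rw [← h1, h2]
    push_cast [ZMod.natCast_self]
    ring
  have hunit : IsUnit (2 : ZMod n) := by
    refine IsUnit.of_mul_eq_one (a := 2) (2 ^ (Δ - 1)) ?_
    rw [← pow_succ']
    have : Δ - 1 + 1 = Δ := by omega
    rw [this, hpow]
  rw [← card_per_eq hΔ hpow hunit s]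
  by_cases hsΔ : s ∣ Δ
  · -- Möbius inversion mod 3
    suffices hz : (((Finset.univ.filter fun a : ZMod n => per n a = s).card : ℕ) : ZMod 3) = 0 by
      exact (ZMod.natCast_eq_zero_iff _ 3).mp hz
    have inv1 := (ArithmeticFunction.sum_eq_iff_sum_smul_moebius_eq_on
      (R := ZMod 3)
      (f := fun e => (((Finset.univ.filter fun a : ZMod n => per n a = e).card : ℕ) : ZMod 3))
      (g := fun d => ((2 ^ d - 1 : ℕ) : ZMod 3))
      {d | d ∣ Δ} (fun m k hmk hk => hmk.trans hk)).mp ?_ s (by omega) hsΔ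
    · have inv2 := (ArithmeticFunction.sum_eq_iff_sum_smul_moebius_eq_on
        (R := ZMod 3)
        (f := fun e => ((if e = 1 then 1 else 0) + (if e = 2 then -1 else 0) : ZMod 3))
        (g := fun d => (if Odd d then 1 else 0 : ZMod 3))
        Set.univ (fun _ _ _ _ => Set.mem_univ _)).mp
        (fun d hd _ => c_sum d hd) s (by omega) (Set.mem_univ s)
      rw [← inv1]
      have heq : ∀ x ∈ s.divisorsAntidiagonal,
          (ArithmeticFunction.moebius x.1 • ((2 ^ x.2 - 1 : ℕ) : ZMod 3))
            = ArithmeticFunction.moebius x.1 • (if Odd x.2 then 1 else 0 : ZMod 3) := by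
        intro x hx
        have hx2 : 0 < x.2 :=
          Nat.pos_of_mem_divisors (Nat.snd_mem_divisors_of_mem_antidiagonal hx)
        rw [two_pow_mod_three hx2]
      rw [Finset.sum_congr rfl heq, inv2]
      have h1 : s ≠ 1 := by omega
      have h2 : s ≠ 2 := by omega
      simp [h1, h2]
    · intro d hd hdΔ
      rw [← Nat.cast_sum]
      rw [← fixed_eq_sum hΔ hpow hd, card_fixed hn hd hdΔ]
  · -- no element has period s
    have hempty : (Finset.univ.filter fun a : ZMod n => per n a = s) = ∅ := by
      rw [Finset.filter_eq_empty_iff]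
      intro a _
      intro hpa
      exact hsΔ (hpa ▸ per_dvd hΔ hpow a)
    rw [hempty]
    simp
end

section
/- Let Δ be odd and y an element of F_{2^Δ}, and let δ be a positive integer. Then Tr((y^{2^δ} + y^{2^{2δ}})(y + y^{2^{2δ}})) = 0 or Tr((y^{2^δ} + 1 + y^{2^{2δ}})(y + 1 + y^{2^{2δ}})) = 0. -/
lemma trace_sq_eq (Δ : ℕ) (x : GaloisField 2 Δ) :
    Algebra.trace (ZMod 2) (GaloisField 2 Δ) (x ^ 2) =
      Algebra.trace (ZMod 2) (GaloisField 2 Δ) x := by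
  apply FaithfulSMul.algebraMap_injective (ZMod 2) (GaloisField 2 Δ)
  rw [trace_eq_sum_automorphisms, trace_eq_sum_automorphisms]
  have h : ∀ σ : GaloisField 2 Δ ≃ₐ[ZMod 2] GaloisField 2 Δ, σ (x ^ 2) = (σ x) ^ 2 := by
    intro σ; exact map_pow σ x 2
  simp_rw [h, ← frobenius_def (p := 2)]
  rw [← map_sum (frobenius (GaloisField 2 Δ) 2)]
  simp only [frobenius_def]
  set S := ∑ σ : GaloisField 2 Δ ≃ₐ[ZMod 2] GaloisField 2 Δ, σ x with hS
  -- S is in the image of ZMod 2 (it equals algebraMap of the trace), hence S ^ 2 = S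
  have : S = algebraMap (ZMod 2) (GaloisField 2 Δ) (Algebra.trace (ZMod 2) (GaloisField 2 Δ) x) := by
    rw [trace_eq_sum_automorphisms]
  rw [this, ← map_pow]
  congr 1
  have : ∀ c : ZMod 2, c ^ 2 = c := by decide
  exact this _

lemma trace_pow_pow (Δ : ℕ) (x : GaloisField 2 Δ) (n : ℕ) :
    Algebra.trace (ZMod 2) (GaloisField 2 Δ) (x ^ 2 ^ n) =
      Algebra.trace (ZMod 2) (GaloisField 2 Δ) x := by
  induction n with
  | zero => simp
  | succ n ih =>
    rw [pow_succ, pow_mul, trace_sq_eq, ih]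

theorem trace_frobenius_combination (Δ : ℕ) (hΔ : Odd Δ)
    (y : GaloisField 2 Δ) (δ : ℕ) (hδ : 0 < δ) :
    Algebra.trace (ZMod 2) (GaloisField 2 Δ)
      ((y ^ 2 ^ δ + y ^ 2 ^ (2 * δ)) * (y + y ^ 2 ^ (2 * δ))) = 0 ∨
    Algebra.trace (ZMod 2) (GaloisField 2 Δ)
      ((y ^ 2 ^ δ + 1 + y ^ 2 ^ (2 * δ)) * (y + 1 + y ^ 2 ^ (2 * δ))) = 0 := by
  set T := Algebra.trace (ZMod 2) (GaloisField 2 Δ) with hT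
  set u := y ^ 2 ^ δ with hu
  set v := y ^ 2 ^ (2 * δ) with hv
  have hexp : (u + 1 + v) * (y + 1 + v) = (u + v) * (y + v) + (u + v) + (y + v) + 1 := by
    ring
  have hone : T 1 = 1 := by
    have := Algebra.trace_algebraMap (R := ZMod 2) (S := GaloisField 2 Δ) 1
    rw [map_one] at this
    rw [hT, this, GaloisField.finrank 2 (by rintro rfl; simp [Nat.odd_iff] at hΔ)]
    obtain ⟨k, hk⟩ := hΔ
    subst hk
    rw [nsmul_eq_mul, mul_one]
    push_cast
    rw [show ((2:ZMod 2)) = 0 from by decide]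
    ring
  have hu' : T u = T y := trace_pow_pow Δ y δ
  have hv' : T v = T y := trace_pow_pow Δ y (2 * δ)
  have key : T ((u + 1 + v) * (y + 1 + v)) = T ((u + v) * (y + v)) + 1 := by
    rw [hexp, map_add, map_add, map_add, map_add, map_add, hone, hu', hv']
    have : ∀ a b : ZMod 2, a + (b + b) + (b + b) + 1 = a + 1 := by decide
    exact this _ _
  have h2 : ∀ c : ZMod 2, c = 0 ∨ c = 1 := by decide
  rcases h2 (T ((u + v) * (y + v))) with h | h
  · exact Or.inl h
  · right; rw [key, h]; decide
end

section
/- Let Δ be odd and not divisible by 3. Then for every s dividing Δ with s > 2, the number N_s of 2-cyclotomic cosets modulo 2^Δ−1 of size s is divisible by 6. -/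
namespace SixDvdAux

open Function Finset

variable {n : ℕ}

/-- orbit size of `a` under doubling -/
noncomputable def per (a : ZMod n) : ℕ := Function.minimalPeriod (fun x => 2 * x) a

lemma iter_eq (j : ℕ) (a : ZMod n) : (fun x : ZMod n => 2 * x)^[j] a = 2 ^ j * a := by
  induction j with
  | zero => simp
  | succ k ih => rw [Function.iterate_succ_apply', ih, pow_succ]; ring

section Gen

variable {Δ : ℕ} (hΔ : 0 < Δ) (h2 : (2 : ZMod n) ^ Δ = 1)
include hΔ h2

lemma isPer (a : ZMod n) : Function.IsPeriodicPt (fun x : ZMod n => 2 * x) Δ a := by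
  unfold Function.IsPeriodicPt Function.IsFixedPt
  rw [iter_eq, h2, one_mul]

lemma memPer (a : ZMod n) : a ∈ Function.periodicPts (fun x : ZMod n => 2 * x) :=
  Function.mk_mem_periodicPts hΔ (isPer hΔ h2 a)

lemma per_pos (a : ZMod n) : 0 < per a :=
  Function.minimalPeriod_pos_of_mem_periodicPts (memPer hΔ h2 a)

lemma per_dvd_iff {a : ZMod n} {j : ℕ} : per a ∣ j ↔ (2 : ZMod n) ^ j * a = a := by
  rw [per, ← Function.isPeriodicPt_iff_minimalPeriod_dvd]
  unfold Function.IsPeriodicPt Function.IsFixedPt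
  rw [iter_eq]

lemma per_dvd_delta (a : ZMod n) : per a ∣ Δ := (per_dvd_iff hΔ h2).2 (by rw [h2, one_mul])

lemma per_pow_mul (j : ℕ) (a : ZMod n) : per ((2:ZMod n) ^ j * a) = per a := by
  have := Function.minimalPeriod_apply_iterate (memPer hΔ h2 a) j
  rwa [iter_eq] at this

lemma cyc_eq_image (a : ZMod n) :
    cycCoset n a = (fun j : ℕ => (2:ZMod n) ^ j * a) '' Set.Iio (per a) := by
  ext x
  constructor
  · rintro ⟨j, rfl⟩
    refine ⟨j % per a, Nat.mod_lt _ (per_pos hΔ h2 a), ?_⟩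
    have := Function.iterate_mod_minimalPeriod_eq (f := fun x : ZMod n => 2 * x) (x := a) (n := j)
    rw [iter_eq, iter_eq] at this
    exact this
  · rintro ⟨j, _, rfl⟩
    exact ⟨j, rfl⟩

lemma ncard_cyc (a : ZMod n) : (cycCoset n a).ncard = per a := by
  rw [cyc_eq_image hΔ h2 a, Set.ncard_image_of_injOn, ← Nat.card_coe_set_eq]
  · simp [Nat.card_Iio]
  · intro i hi j hj hij
    have key : Set.InjOn (fun j => (fun x : ZMod n => 2 * x)^[j] a) (Set.Iio (per a)) :=
      Function.iterate_injOn_Iio_minimalPeriod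
    exact key hi hj (by simpa only [iter_eq] using hij)

lemma mem_cyc_self (a : ZMod n) : a ∈ cycCoset n a := ⟨0, by simp⟩

lemma cyc_eq_of_mem {a b : ZMod n} (hb : b ∈ cycCoset n a) : cycCoset n b = cycCoset n a := by
  obtain ⟨j, rfl⟩ := hb
  ext x
  constructor
  · rintro ⟨k, rfl⟩
    exact ⟨k + j, by rw [pow_add]; ring⟩
  · rintro ⟨k, rfl⟩
    refine ⟨k + (Δ - 1) * j, ?_⟩
    have h1 : k + (Δ - 1) * j + j = k + Δ * j := by
      cases Δ with
      | zero => omega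
      | succ m => simp [Nat.succ_sub_one, Nat.succ_mul]; omega
    have h3 : (2:ZMod n) ^ (k + (Δ - 1) * j) * ((2:ZMod n) ^ j * a) = 2 ^ (k + (Δ-1)*j + j) * a := by
      rw [pow_add (2:ZMod n) (k + (Δ-1)*j) j]; ring
    rw [h3, h1, pow_add, pow_mul, h2, one_pow, mul_one]

end Gen

section Count

open scoped Classical in
/-- the set of elements of orbit size exactly `s` -/
noncomputable def Tt (n : ℕ) [NeZero n] (s : ℕ) : Finset (ZMod n) :=
  Finset.univ.filter (fun a => per a = s)

variable [NeZero n] {Δ : ℕ} (hΔ : 0 < Δ) (h2 : (2 : ZMod n) ^ Δ = 1)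
include hΔ h2

lemma Tt_card_eq (s : ℕ) : (Tt n s).card = Ncos n s * s := by
  classical
  set F : Finset (Set (ZMod n)) := (Tt n s).image (fun a => cycCoset n a) with hF
  have hNcos : Ncos n s = F.card := by
    rw [Ncos]
    have hset : {C : Set (ZMod n) | (∃ a, C = cycCoset n a) ∧ C.ncard = s} = ↑F := by
      ext C
      simp only [Set.mem_setOf_eq, hF, coe_image, Set.mem_image, mem_coe, Tt, mem_filter,
        mem_univ, true_and]
      constructor
      · rintro ⟨⟨a, rfl⟩, hcard⟩
        exact ⟨a, by rwa [ncard_cyc hΔ h2] at hcard, rfl⟩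
      · rintro ⟨a, hpa, rfl⟩
        exact ⟨⟨a, rfl⟩, by rw [ncard_cyc hΔ h2, hpa]⟩
    rw [hset, Set.ncard_coe_finset]
  have hfib : ∀ C ∈ F, ((Tt n s).filter (fun a => cycCoset n a = C)).card = s := by
    intro C hC
    obtain ⟨a0, ha0, rfl⟩ := mem_image.1 hC
    have ha0' : per a0 = s := by simpa [Tt] using ha0
    have hset : (((Tt n s).filter (fun a => cycCoset n a = cycCoset n a0)) : Set (ZMod n))
        = cycCoset n a0 := by
      ext b
      simp only [coe_filter, Set.mem_setOf_eq, Tt, mem_filter, mem_univ, true_and]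
      constructor
      · rintro ⟨_, hb⟩
        rw [← hb]; exact mem_cyc_self hΔ h2 b
      · intro hb
        obtain ⟨j, rfl⟩ := hb
        exact ⟨by rw [per_pow_mul hΔ h2, ha0'], cyc_eq_of_mem hΔ h2 ⟨j, rfl⟩⟩
    have hnc := congrArg Set.ncard hset
    rwa [Set.ncard_coe_finset, ncard_cyc hΔ h2, ha0'] at hnc
  calc (Tt n s).card
      = ∑ C ∈ F, ((Tt n s).filter (fun a => cycCoset n a = C)).card :=
        card_eq_sum_card_image _ _
    _ = ∑ _C ∈ F, s := sum_congr rfl hfib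
    _ = F.card * s := by rw [sum_const, smul_eq_mul]
    _ = Ncos n s * s := by rw [hNcos]

omit hΔ h2 in
lemma card_ker {c : ℕ} (hc : c ∣ n) (hc0 : 0 < c) :
    (Finset.univ.filter fun a : ZMod n => (c : ZMod n) * a = 0).card = c := by
  classical
  obtain ⟨m, hm⟩ := hc
  have hn0 : 0 < n := Nat.pos_of_ne_zero (NeZero.ne n)
  have hm0 : 0 < m := by
    rcases Nat.eq_zero_or_pos m with h | h
    · subst h; simp at hm; omega
    · exact h
  have hEq : (Finset.univ.filter fun a : ZMod n => (c : ZMod n) * a = 0)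
      = Finset.image (fun k : ℕ => ((m * k : ℕ) : ZMod n)) (range c) := by
    ext a
    simp only [mem_filter, mem_univ, true_and, mem_image, mem_range]
    constructor
    · intro h
      have hcast : ((c * a.val : ℕ) : ZMod n) = 0 := by
        push_cast
        rw [ZMod.natCast_val, ZMod.cast_id]
        exact h
      have hdvd : n ∣ c * a.val := (ZMod.natCast_eq_zero_iff _ _).1 hcast
      obtain ⟨t, ht⟩ := hdvd
      have hval : a.val = m * t := by
        have hh : c * a.val = c * (m * t) := by rw [ht, hm]; ring
        exact Nat.eq_of_mul_eq_mul_left hc0 hh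
      refine ⟨t, ?_, ?_⟩
      · have hv : a.val < n := ZMod.val_lt a
        have hv2 : m * t < m * c := by
          calc m * t = a.val := hval.symm
            _ < n := hv
            _ = m * c := by rw [hm, mul_comm]
        exact lt_of_mul_lt_mul_left hv2 (Nat.zero_le m)
      · rw [← hval, ZMod.natCast_val, ZMod.cast_id]
    · rintro ⟨k, hk, rfl⟩
      have : ((c : ℕ) : ZMod n) * ((m * k : ℕ) : ZMod n) = ((n * k : ℕ) : ZMod n) := by
        push_cast [hm]; ring
      rw [this]
      simp [ZMod.natCast_eq_zero_iff, Dvd.intro k rfl]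
  rw [hEq, card_image_of_injOn, card_range]
  intro k1 hk1 k2 hk2 h
  simp only [coe_range, Set.mem_Iio] at hk1 hk2
  have hlt : ∀ k, k < c → m * k < n := by
    intro k hk
    calc m * k < m * c := mul_lt_mul_of_pos_left hk hm0
      _ = n := by rw [hm, mul_comm]
  have h1 := ZMod.val_cast_of_lt (hlt k1 hk1)
  have h2' := ZMod.val_cast_of_lt (hlt k2 hk2)
  have h' : ((m * k1 : ℕ) : ZMod n) = ((m * k2 : ℕ) : ZMod n) := h
  have : m * k1 = m * k2 := by rw [← h1, ← h2', h']
  exact Nat.eq_of_mul_eq_mul_left hm0 this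

omit hΔ h2 in
lemma pow_fix_iff {d : ℕ} (a : ZMod n) :
    (2 : ZMod n) ^ d * a = a ↔ ((2 ^ d - 1 : ℕ) : ZMod n) * a = 0 := by
  have h1 : ((2 ^ d - 1 : ℕ) : ZMod n) = (2 : ZMod n) ^ d - 1 := by
    have hle : (1 : ℕ) ≤ 2 ^ d := Nat.one_le_two_pow
    push_cast [hle]
    ring
  rw [h1, sub_mul, one_mul, sub_eq_zero]

lemma card_A {d : ℕ} (hdn : (2 ^ d - 1 : ℕ) ∣ n) (hd0 : 0 < d) :
    (Finset.univ.filter fun a : ZMod n => per a ∣ d).card = 2 ^ d - 1 := by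
  classical
  have hEq : (Finset.univ.filter fun a : ZMod n => per a ∣ d)
      = (Finset.univ.filter fun a : ZMod n => ((2 ^ d - 1 : ℕ) : ZMod n) * a = 0) := by
    ext a
    simp only [mem_filter, mem_univ, true_and]
    rw [per_dvd_iff hΔ h2, pow_fix_iff]
  rw [hEq, card_ker hdn (by have := Nat.one_lt_two_pow_iff.2 hd0.ne'; omega)]

lemma sum_per {s : ℕ} (hs : 0 < s) :
    (Finset.univ.filter fun a : ZMod n => per a ∣ s).card
      = ∑ d ∈ s.divisors, (Tt n d).card := by
  classical
  rw [Finset.card_eq_sum_card_fiberwise (f := fun a => per a) (t := s.divisors)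
    (fun a ha => Nat.mem_divisors.2 ⟨(mem_filter.1 ha).2, hs.ne'⟩)]
  refine sum_congr rfl fun d hd => ?_
  congr 1
  rw [filter_filter]
  ext a
  simp only [Tt, mem_filter, mem_univ, true_and]
  exact ⟨fun h => h.2, fun h => ⟨h ▸ (Nat.mem_divisors.1 hd).1, h⟩⟩

lemma even_Ncos {s : ℕ} (hsodd : Odd s) (hs : 2 < s) : 2 ∣ Ncos n s := by
  classical
  set F : Finset (Set (ZMod n)) := (Tt n s).image (fun a => cycCoset n a) with hF
  have hNcos : Ncos n s = F.card := by
    rw [Ncos]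
    have hset : {C : Set (ZMod n) | (∃ a, C = cycCoset n a) ∧ C.ncard = s} = ↑F := by
      ext C
      simp only [Set.mem_setOf_eq, hF, coe_image, Set.mem_image, mem_coe, Tt, mem_filter,
        mem_univ, true_and]
      constructor
      · rintro ⟨⟨a, rfl⟩, hcard⟩
        exact ⟨a, by rwa [ncard_cyc hΔ h2] at hcard, rfl⟩
      · rintro ⟨a, hpa, rfl⟩
        exact ⟨⟨a, rfl⟩, by rw [ncard_cyc hΔ h2, hpa]⟩
    rw [hset, Set.ncard_coe_finset]
  -- `per` is invariant under negation
  have hperneg : ∀ a : ZMod n, per (-a) = per a := by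
    intro a
    have key : ∀ j : ℕ, per (-a) ∣ j ↔ per a ∣ j := by
      intro j
      rw [per_dvd_iff hΔ h2, per_dvd_iff hΔ h2]
      constructor
      · intro h
        have := congrArg Neg.neg h
        simpa using this
      · intro h
        rw [mul_neg, h]
    exact Nat.dvd_antisymm ((key (per a)).2 dvd_rfl) ((key (per (-a))).1 dvd_rfl)
  have hnegcyc : ∀ a : ZMod n, (Neg.neg '' cycCoset n a) = cycCoset n (-a) := by
    intro a
    ext x
    simp only [Set.mem_image, cycCoset, Set.mem_setOf_eq]
    constructor
    · rintro ⟨y, ⟨j, rfl⟩, rfl⟩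
      exact ⟨j, by ring⟩
    · rintro ⟨j, rfl⟩
      exact ⟨2 ^ j * a, ⟨j, rfl⟩, by ring⟩
  have hmemF : ∀ a : ZMod n, per a = s → cycCoset n a ∈ F := by
    intro a ha
    exact mem_image.2 ⟨a, by simp [Tt, ha], rfl⟩
  have hinvmem : ∀ C ∈ F, (Neg.neg '' C) ∈ F := by
    intro C hC
    obtain ⟨a, ha, rfl⟩ := mem_image.1 hC
    have ha' : per a = s := by simpa [Tt] using ha
    rw [hnegcyc a]
    exact hmemF _ (by rw [hperneg, ha'])
  have hfree : ∀ C ∈ F, (Neg.neg '' C) ≠ C := by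
    intro C hC hfix
    obtain ⟨a, ha, rfl⟩ := mem_image.1 hC
    have ha' : per a = s := by simpa [Tt] using ha
    rw [hnegcyc a] at hfix
    have hmem : -a ∈ cycCoset n a := by rw [← hfix]; exact mem_cyc_self hΔ h2 (-a)
    obtain ⟨j, hj⟩ := hmem
    have h2j : (2 : ZMod n) ^ (j + j) * a = a := by
      calc (2:ZMod n) ^ (j+j) * a = 2 ^ j * (2 ^ j * a) := by rw [pow_add]; ring
        _ = 2 ^ j * (-a) := by rw [← hj]
        _ = -(2 ^ j * a) := by ring
        _ = -(-a) := by rw [← hj]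
        _ = a := neg_neg a
    have hsdvd2 : s ∣ 2 * j := by
      have := ha' ▸ (per_dvd_iff hΔ h2 (a := a) (j := j + j)).2 h2j
      rwa [two_mul]
    have hcop : Nat.Coprime s 2 := by
      apply Nat.Coprime.symm
      exact (Nat.prime_two.coprime_iff_not_dvd).2
        (by have := Nat.odd_iff.1 hsodd; omega)
    have hsj : s ∣ j := hcop.dvd_of_dvd_mul_left hsdvd2
    have hja : (2 : ZMod n) ^ j * a = a := (per_dvd_iff hΔ h2).1 (ha' ▸ hsj)
    have haa : -a = a := by rw [hj, hja]
    have h2a : (2 : ZMod n) * a = 0 := by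
      rw [two_mul]
      nth_rewrite 2 [← haa]
      exact add_neg_cancel a
    have ha0 : a = 0 := by
      have hΔa : (2 : ZMod n) ^ Δ * a = a := by rw [h2, one_mul]
      cases Δ with
      | zero => exact absurd rfl hΔ.ne
      | succ m =>
        have hh : (2 : ZMod n) ^ (m + 1) * a = 2 ^ m * (2 * a) := by
          rw [pow_succ]; ring
        rw [hh, h2a, mul_zero] at hΔa
        exact hΔa.symm
    have hper1 : per a = 1 := by
      apply Nat.dvd_one.1
      apply (per_dvd_iff hΔ h2 (a := a) (j := 1)).2
      rw [ha0, mul_zero]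
    omega
  have hsum : ∑ _C ∈ F, (1 : ZMod 2) = 0 :=
    Finset.sum_involution (fun C _ => Neg.neg '' C)
      (fun C _ => by decide)
      (fun C hC _ => hfree C hC)
      (fun C hC => hinvmem C hC)
      (fun C hC => by simp [Set.image_image])
  rw [Finset.sum_const, nsmul_eq_mul, mul_one] at hsum
  rw [hNcos]
  exact (ZMod.natCast_eq_zero_iff _ _).1 hsum

end Count

lemma key3 {Δ : ℕ} (g : ℕ → ℕ) (hg1 : g 1 = 1) (hodd : Odd Δ)
    (hsum : ∀ d, d ∣ Δ → 0 < d → ∑ e ∈ d.divisors, g e = 2 ^ d - 1) :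
    ∀ s, s ∣ Δ → 1 < s → 3 ∣ g s := by
  intro s
  induction s using Nat.strong_induction_on with
  | _ s ih =>
    intro hsΔ hs1
    have hs0 : 0 < s := by omega
    have hsum' := hsum s hsΔ hs0
    have hsodd : Odd s := by
      rcases Nat.even_or_odd s with h | h
      · exfalso
        have hd2 : (2 : ℕ) ∣ Δ := dvd_trans h.two_dvd hsΔ
        have := Nat.odd_iff.1 hodd
        omega
      · exact h
    have hs_mem : s ∈ s.divisors := Nat.mem_divisors_self s hs0.ne'
    have h1_mem : 1 ∈ s.divisors.erase s :=
      Finset.mem_erase.2 ⟨by omega, Nat.one_mem_divisors.2 hs0.ne'⟩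
    have hsplit : ∑ e ∈ s.divisors, g e
        = g s + (g 1 + ∑ e ∈ (s.divisors.erase s).erase 1, g e) := by
      rw [← Finset.add_sum_erase _ _ hs_mem, ← Finset.add_sum_erase _ _ h1_mem]
    have hR : 3 ∣ ∑ e ∈ (s.divisors.erase s).erase 1, g e := by
      apply Finset.dvd_sum
      intro e he
      have he1 : e ≠ 1 := (Finset.mem_erase.1 he).1
      have hes : e ≠ s := (Finset.mem_erase.1 (Finset.mem_erase.1 he).2).1
      have hed : e ∣ s := (Nat.mem_divisors.1 (Finset.mem_erase.1 (Finset.mem_erase.1 he).2).2).1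
      have helt : e < s := lt_of_le_of_ne (Nat.le_of_dvd hs0 hed) hes
      have he1' : 1 < e := by
        have : 0 < e := Nat.pos_of_dvd_of_pos hed hs0
        omega
      exact ih e helt (hed.trans hsΔ) he1'
    obtain ⟨k, hk⟩ := hsodd
    have hpow : 2 ^ s % 3 = 2 := by
      have h4 : 4 ^ k % 3 = 1 := by
        rw [Nat.pow_mod]; norm_num
      have hh : 2 ^ s = 2 * 4 ^ k := by
        rw [hk, pow_succ, pow_mul]; norm_num [mul_comm]
      omega
    have hge : 2 ≤ 2 ^ s := by
      calc 2 = 2 ^ 1 := (pow_one 2).symm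
        _ ≤ 2 ^ s := Nat.pow_le_pow_right (by norm_num) hs0
    rw [hsplit, hg1] at hsum'
    obtain ⟨r, hr⟩ := hR
    omega

end SixDvdAux

theorem six_dvd_Ncos (Δ s : ℕ) (hΔodd : Odd Δ) (hΔ3 : ¬ 3 ∣ Δ)
    (hsd : s ∣ Δ) (hs : 2 < s) :
    6 ∣ Ncos (2 ^ Δ - 1) s := by
  have hΔpos : 0 < Δ := hΔodd.pos
  set n := 2 ^ Δ - 1 with hn
  have hn1 : n + 1 = 2 ^ Δ := by
    have : (1:ℕ) ≤ 2 ^ Δ := Nat.one_le_two_pow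
    omega
  have hnpos : 0 < n := by
    have : 1 < 2 ^ Δ := Nat.one_lt_two_pow_iff.2 hΔpos.ne'
    omega
  haveI : NeZero n := ⟨hnpos.ne'⟩
  have h2 : (2 : ZMod n) ^ Δ = 1 := by
    have hcast : ((2 ^ Δ : ℕ) : ZMod n) = ((n + 1 : ℕ) : ZMod n) := by rw [hn1]
    push_cast at hcast
    rw [ZMod.natCast_self, zero_add] at hcast
    simpa using hcast
  have hdvd : ∀ d, d ∣ Δ → (2 ^ d - 1 : ℕ) ∣ n := by
    rintro d ⟨k, hk⟩
    rw [hn, hk, pow_mul]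
    simpa using Nat.sub_dvd_pow_sub_pow (2 ^ d) 1 k
  have hsum : ∀ d, d ∣ Δ → 0 < d →
      ∑ e ∈ d.divisors, (SixDvdAux.Tt n e).card = 2 ^ d - 1 := by
    intro d hd hd0
    rw [← SixDvdAux.sum_per hΔpos h2 hd0, SixDvdAux.card_A hΔpos h2 (hdvd d hd) hd0]
  have hg1 : (SixDvdAux.Tt n 1).card = 1 := by
    have h1 := hsum 1 (one_dvd Δ) one_pos
    simpa [Nat.divisors_one] using h1
  have h3 : 3 ∣ (SixDvdAux.Tt n s).card :=
    SixDvdAux.key3 _ hg1 hΔodd hsum s hsd (by omega)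
  rw [SixDvdAux.Tt_card_eq hΔpos h2] at h3
  have h3N : 3 ∣ Ncos n s := by
    have hcop : Nat.Coprime 3 s :=
      (Nat.prime_three.coprime_iff_not_dvd).2 (fun h => hΔ3 (h.trans hsd))
    exact hcop.dvd_of_dvd_mul_right h3
  have hsodd : Odd s := by
    rcases Nat.even_or_odd s with h | h
    · exfalso
      have hd2 : (2 : ℕ) ∣ Δ := dvd_trans h.two_dvd hsd
      have := Nat.odd_iff.1 hΔodd
      omega
    · exact h
  have h2N : 2 ∣ Ncos n s := SixDvdAux.even_Ncos hΔpos h2 hsodd hs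
  have h6 := Nat.Coprime.mul_dvd_of_dvd_of_dvd (show Nat.Coprime 2 3 by norm_num) h2N h3N
  simpa using h6
end

section
/- For every odd Δ > 1, there exists a partition of GR(4^Δ)\{0} into 2^Δ−1 triples of the form {a, 2a, 3a} and (2^Δ−1)(2^Δ−2)/6 sixtuples of the form {a, b, −a−b, −a, −b, a+b}, such that the partition is invariant under multiplication by any nonzero element of the Teichmüller set. -/
/-- The Teichmüller set of the ring `R` relative to the element `ξ`:
`{0} ∪ {1, ξ, ξ², …}`. -/
def Teich {R : Type*} [CommRing R] (ξ : R) : Set R :=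
  insert 0 {x | ∃ i : ℕ, x = ξ ^ i}

/-- An axiomatization of the Galois ring `GR(4^Δ)` together with a generator `ξ`
of the Teichmüller group: a commutative ring of characteristic 4 and cardinality `4^Δ`
in which `ξ` has multiplicative order `2^Δ - 1` and every element has a unique 2-adic
decomposition `a + 2b` with `a, b` in the Teichmüller set. -/
structure IsGaloisRing4 (Δ : ℕ) {R : Type*} [CommRing R] (ξ : R) : Prop where
  two_ne_zero : (2 : R) ≠ 0
  four_eq_zero : (4 : R) = 0
  card : Nat.card R = 4 ^ Δ
  ord : orderOf ξ = 2 ^ Δ - 1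
  decomp : ∀ A : R, ∃! p : R × R, p.1 ∈ Teich ξ ∧ p.2 ∈ Teich ξ ∧ A = p.1 + 2 * p.2

namespace GR4

abbrev Fq (R : Type*) [CommRing R] := R ⧸ Ideal.span ({2} : Set R)

variable {Δ : ℕ} {R : Type*} [CommRing R] {ξ : R}

noncomputable def rh : R →+* Fq R := Ideal.Quotient.mk _

section basic

variable (hΔ : 1 < Δ) (hGR : IsGaloisRing4 Δ ξ)

lemma one_ne_zeroR (hGR : IsGaloisRing4 Δ ξ) : (1 : R) ≠ 0 := by
  intro h
  apply hGR.two_ne_zero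
  calc (2:R) = 2 * 1 := by ring
  _ = 0 := by rw [h]; ring

lemma finiteR (hGR : IsGaloisRing4 Δ ξ) : Finite R := by
  have h : Nat.card R ≠ 0 := by rw [hGR.card]; positivity
  by_contra hinf
  rw [not_finite_iff_infinite] at hinf
  exact h (Nat.card_eq_zero_of_infinite)

lemma mem_T_iff {x : R} : x ∈ Teich ξ ↔ x = 0 ∨ ∃ i : ℕ, x = ξ ^ i := by
  simp [Teich]

lemma T_zero : (0 : R) ∈ Teich ξ := by simp [Teich]

lemma T_one : (1 : R) ∈ Teich ξ := by
  rw [mem_T_iff]; right; exact ⟨0, by simp⟩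

lemma T_pow (i : ℕ) : ξ ^ i ∈ Teich ξ := by
  rw [mem_T_iff]; right; exact ⟨i, rfl⟩

lemma T_mul {a b : R} (ha : a ∈ Teich ξ) (hb : b ∈ Teich ξ) : a * b ∈ Teich ξ := by
  rw [mem_T_iff] at ha hb ⊢
  rcases ha with rfl | ⟨i, rfl⟩
  · left; ring
  rcases hb with rfl | ⟨j, rfl⟩
  · left; ring
  · right; exact ⟨i + j, by rw [pow_add]⟩

lemma xi_pow_card (hGR : IsGaloisRing4 Δ ξ) : ξ ^ (2 ^ Δ - 1) = 1 := by
  rw [← hGR.ord]; exact pow_orderOf_eq_one ξ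

lemma T_unit (hΔ : 1 < Δ) (hGR : IsGaloisRing4 Δ ξ) {a : R} (ha : a ∈ Teich ξ) (h0 : a ≠ 0) :
    ∃ b ∈ Teich ξ, a * b = 1 := by
  rw [mem_T_iff] at ha
  rcases ha with rfl | ⟨i, rfl⟩
  · exact absurd rfl h0
  have hn : 1 ≤ 2 ^ Δ - 1 := by
    have : (2:ℕ)^1 ≤ 2 ^ Δ := Nat.pow_le_pow_right (by norm_num) hΔ.le
    omega
  refine ⟨ξ ^ (i * (2 ^ Δ - 1 - 1)), T_pow _, ?_⟩
  rw [← pow_add]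
  obtain ⟨m, hm⟩ : ∃ m, 2 ^ Δ - 1 = m + 1 := ⟨2 ^ Δ - 2, by omega⟩
  have hi : i + i * (2 ^ Δ - 1 - 1) = (2 ^ Δ - 1) * i := by
    rw [hm]; simp; ring
  rw [hi, pow_mul, xi_pow_card hGR, one_pow]

lemma two_mem_span : (2 : R) ∈ Ideal.span ({2} : Set R) :=
  Ideal.subset_span rfl

lemma rh_two : rh (2 : R) = 0 := by
  rw [rh, Ideal.Quotient.eq_zero_iff_mem]; exact two_mem_span

lemma charF : (2 : Fq R) = 0 := by
  calc (2 : Fq R) = rh (2 : R) := (map_ofNat rh 2).symm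
  _ = 0 := rh_two

lemma addselfF (v : Fq R) : v + v = 0 := by
  have h : (2 : Fq R) = 0 := charF
  linear_combination v * h

lemma negF (v : Fq R) : -v = v := by
  linear_combination - addselfF v

-- injectivity of rh on Teich
lemma rh_inj_T (hGR : IsGaloisRing4 Δ ξ) {a b : R} (ha : a ∈ Teich ξ) (hb : b ∈ Teich ξ)
    (h : rh a = rh b) : a = b := by
  rw [rh, Ideal.Quotient.eq, Ideal.mem_span_singleton'] at h
  obtain ⟨m, hm⟩ := h
  obtain ⟨⟨t, u⟩, ⟨ht, hu, hdec⟩, -⟩ := hGR.decomp m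
  have h42 : (2:R) * 2 = 0 := by
    have h4 : (4:R) = 0 := hGR.four_eq_zero
    linear_combination h4
  have hab : a = b + 2 * t := by
    linear_combination (-1 : R) * hm + 2 * hdec + u * hGR.four_eq_zero
  obtain ⟨p, hp, huniq⟩ := hGR.decomp a
  have e1 := huniq (a, 0) ⟨ha, T_zero, by ring⟩
  have e2 := huniq (b, t) ⟨hb, ht, by rw [hab]⟩
  have := e1.trans e2.symm
  exact (congrArg Prod.fst this)

lemma rh_surj_T (hGR : IsGaloisRing4 Δ ξ) (z : Fq R) : ∃ a ∈ Teich ξ, rh a = z := by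
  obtain ⟨A, hA⟩ := Ideal.Quotient.mk_surjective (I := Ideal.span ({2} : Set R)) z
  obtain ⟨⟨a, b⟩, ⟨ha, hb, hdec⟩, -⟩ := hGR.decomp A
  refine ⟨a, ha, ?_⟩
  have : rh A = rh a := by
    rw [hdec]; simp only [map_add, map_mul, rh_two]; ring
  rw [← this]; exact hA

lemma two_congr (hGR : IsGaloisRing4 Δ ξ) {x y : R} (h : rh x = rh y) : 2 * x = 2 * y := by
  rw [rh, Ideal.Quotient.eq, Ideal.mem_span_singleton'] at h
  obtain ⟨m, hm⟩ := h
  have h4 : (4:R) = 0 := hGR.four_eq_zero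
  linear_combination (-2 : R) * hm + m * h4

end basic

noncomputable def tau (hGR : IsGaloisRing4 Δ ξ) (z : Fq R) : R :=
  (rh_surj_T hGR z).choose

section tau

variable (hΔ : 1 < Δ) (hGR : IsGaloisRing4 Δ ξ)

lemma tau_mem (z : Fq R) : tau hGR z ∈ Teich ξ := (rh_surj_T hGR z).choose_spec.1

lemma rh_tau (z : Fq R) : rh (tau hGR z) = z := (rh_surj_T hGR z).choose_spec.2

lemma tau_rh {a : R} (ha : a ∈ Teich ξ) : tau hGR (rh a) = a :=
  rh_inj_T hGR (tau_mem hGR _) ha (rh_tau hGR _)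

lemma tau_inj {z w : Fq R} (h : tau hGR z = tau hGR w) : z = w := by
  rw [← rh_tau hGR z, ← rh_tau hGR w, h]

lemma tau_zero : tau hGR (0 : Fq R) = 0 := by
  have : rh (0 : R) = 0 := map_zero rh
  rw [← this, tau_rh hGR T_zero]

lemma tau_eq_zero_iff {z : Fq R} : tau hGR z = 0 ↔ z = 0 := by
  constructor
  · intro h; rw [← rh_tau hGR z, h, map_zero]
  · rintro rfl; exact tau_zero hGR

lemma tau_mul (z w : Fq R) : tau hGR (z * w) = tau hGR z * tau hGR w := by
  apply rh_inj_T hGR (tau_mem hGR _) (T_mul (tau_mem hGR _) (tau_mem hGR _))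
  rw [rh_tau, map_mul, rh_tau, rh_tau]

lemma sq_injF (hΔ : 1 < Δ) (hGR : IsGaloisRing4 Δ ξ) {z w : Fq R} (h : z * z = w * w) : z = w := by
  have h2 : (z + w) * (z + w) = 0 := by
    have hc : (2 : Fq R) = 0 := charF
    linear_combination h + (w * w + z * w) * hc
  set c := tau hGR (z + w) with hc
  have hcc : rh (c * c) = rh (0 : R) := by
    rw [map_mul, rh_tau, map_zero, h2]
  have hc0 : c * c = 0 := rh_inj_T hGR (T_mul (tau_mem hGR _) (tau_mem hGR _)) T_zero hcc
  have hczero : c = 0 := by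
    by_contra hne
    obtain ⟨b, -, hb⟩ := T_unit hΔ hGR (tau_mem hGR (z + w)) hne
    have : (1 : R) = 0 := by
      calc (1:R) = (c * b) * (c * b) := by rw [hb]; ring
      _ = (c * c) * (b * b) := by ring
      _ = 0 := by rw [hc0]; ring
    exact one_ne_zeroR hGR this
  have hzw : z + w = 0 := by
    rw [hc, tau_eq_zero_iff hGR] at hczero; exact hczero
  linear_combination hzw - w * (charF (R := R))

lemma sq_surjF (hΔ : 1 < Δ) (hGR : IsGaloisRing4 Δ ξ) (z : Fq R) : ∃ w : Fq R, w * w = z := by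
  haveI : Finite R := finiteR hGR
  haveI : Finite (Fq R) := Finite.of_surjective rh Ideal.Quotient.mk_surjective
  have hinj : Function.Injective (fun w : Fq R => w * w) := fun a b h => sq_injF hΔ hGR h
  exact Finite.injective_iff_surjective.mp hinj z

end tau

noncomputable def fsqrt (hΔ : 1 < Δ) (hGR : IsGaloisRing4 Δ ξ) (z : Fq R) : Fq R :=
  (sq_surjF hΔ hGR z).choose

section fsqrt

variable (hΔ : 1 < Δ) (hGR : IsGaloisRing4 Δ ξ)

lemma fsqrt_sq (z : Fq R) : fsqrt hΔ hGR z * fsqrt hΔ hGR z = z :=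
  (sq_surjF hΔ hGR z).choose_spec

lemma fsqrt_unique {z w : Fq R} (h : w * w = z) : fsqrt hΔ hGR z = w :=
  sq_injF hΔ hGR (by rw [fsqrt_sq, h])

lemma fsqrt_mul (z w : Fq R) :
    fsqrt hΔ hGR (z * w) = fsqrt hΔ hGR z * fsqrt hΔ hGR w := by
  apply fsqrt_unique
  rw [show fsqrt hΔ hGR z * fsqrt hΔ hGR w * (fsqrt hΔ hGR z * fsqrt hΔ hGR w)
      = (fsqrt hΔ hGR z * fsqrt hΔ hGR z) * (fsqrt hΔ hGR w * fsqrt hΔ hGR w) from by ring,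
    fsqrt_sq, fsqrt_sq]

lemma fsqrt_zero : fsqrt hΔ hGR (0 : Fq R) = 0 := fsqrt_unique hΔ hGR (by ring)

lemma fsqrt_eq_zero_iff {z : Fq R} : fsqrt hΔ hGR z = 0 ↔ z = 0 := by
  constructor
  · intro h; rw [← fsqrt_sq hΔ hGR z, h]; ring
  · rintro rfl; exact fsqrt_zero hΔ hGR

end fsqrt

section arith

lemma neg_eq (hGR : IsGaloisRing4 Δ ξ) (x : R) : -x = x + 2 * x := by
  linear_combination (-x) * hGR.four_eq_zero

lemma two_tau_add (hGR : IsGaloisRing4 Δ ξ) (z w : Fq R) :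
    2 * tau hGR z + 2 * tau hGR w = 2 * tau hGR (z + w) := by
  have h := two_congr hGR (x := tau hGR z + tau hGR w) (y := tau hGR (z + w))
    (by rw [map_add, rh_tau, rh_tau, rh_tau])
  linear_combination h

lemma carry' (hGR : IsGaloisRing4 Δ ξ) {a b : R} (ha : a ∈ Teich ξ) (hb : b ∈ Teich ξ) :
    ∃ c ∈ Teich ξ, a * a + b * b = c + 2 * (a * b) := by
  obtain ⟨⟨C, D⟩, ⟨hC, hD, hE⟩, -⟩ := hGR.decomp (a + b)
  refine ⟨C * C, T_mul hC hC, ?_⟩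
  simp only at hE
  linear_combination (a + b + C + 2 * D) * hE + (C * D + D * D - a * b) * hGR.four_eq_zero

lemma tau_fsqrt_self (hΔ : 1 < Δ) (hGR : IsGaloisRing4 Δ ξ) {x : R} (hx : x ∈ Teich ξ) :
    tau hGR (fsqrt hΔ hGR (rh x)) * tau hGR (fsqrt hΔ hGR (rh x)) = x := by
  rw [← tau_mul hGR, fsqrt_sq, tau_rh hGR hx]

lemma carry (hΔ : 1 < Δ) (hGR : IsGaloisRing4 Δ ξ) {x y : R} (hx : x ∈ Teich ξ)
    (hy : y ∈ Teich ξ) :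
    x + y = tau hGR (rh x + rh y) + 2 * tau hGR (fsqrt hΔ hGR (rh x * rh y)) := by
  set a := tau hGR (fsqrt hΔ hGR (rh x)) with hadef
  set b := tau hGR (fsqrt hΔ hGR (rh y)) with hbdef
  have ha2 : a * a = x := tau_fsqrt_self hΔ hGR hx
  have hb2 : b * b = y := tau_fsqrt_self hΔ hGR hy
  obtain ⟨c, hcT, hcE⟩ := carry' hGR (tau_mem hGR (fsqrt hΔ hGR (rh x)))
    (tau_mem hGR (fsqrt hΔ hGR (rh y)))
  rw [ha2, hb2] at hcE
  have hab : a * b = tau hGR (fsqrt hΔ hGR (rh x * rh y)) := by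
    rw [hadef, hbdef, ← tau_mul hGR, ← fsqrt_mul]
  have hc : c = tau hGR (rh x + rh y) := by
    have h1 : rh c = rh x + rh y := by
      have : rh (x + y) = rh (c + 2 * (a * b)) := by rw [← hcE]
      simp only [map_add, map_mul, rh_two] at this
      linear_combination -this
    rw [← h1, tau_rh hGR hcT]
  rw [hcE, hc, hab]

noncomputable def eta (hGR : IsGaloisRing4 Δ ξ) (d e : Fq R) : R :=
  tau hGR d + 2 * tau hGR e

lemma eta_inj (hGR : IsGaloisRing4 Δ ξ) {d e d' e' : Fq R}
    (h : eta hGR d e = eta hGR d' e') : d = d' ∧ e = e' := by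
  obtain ⟨p, hp, huniq⟩ := hGR.decomp (eta hGR d e)
  have h1 := huniq (tau hGR d, tau hGR e) ⟨tau_mem hGR d, tau_mem hGR e, rfl⟩
  have h2 := huniq (tau hGR d', tau hGR e') ⟨tau_mem hGR d', tau_mem hGR e', h⟩
  have := h1.trans h2.symm
  exact ⟨tau_inj hGR (congrArg Prod.fst this), tau_inj hGR (congrArg Prod.snd this)⟩

lemma eta_surj (hGR : IsGaloisRing4 Δ ξ) (A : R) : ∃ d e : Fq R, A = eta hGR d e := by
  obtain ⟨⟨a, b⟩, ⟨ha, hb, hE⟩, -⟩ := hGR.decomp A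
  exact ⟨rh a, rh b, by rw [eta, tau_rh hGR ha, tau_rh hGR hb]; exact hE⟩

lemma eta_zero (hGR : IsGaloisRing4 Δ ξ) : eta hGR 0 0 = 0 := by
  rw [eta, tau_zero hGR]; ring

lemma eta_eq_zero_iff (hGR : IsGaloisRing4 Δ ξ) {d e : Fq R} :
    eta hGR d e = 0 ↔ d = 0 ∧ e = 0 := by
  constructor
  · intro h; exact eta_inj hGR (h.trans (eta_zero hGR).symm)
  · rintro ⟨rfl, rfl⟩; exact eta_zero hGR

lemma neg_eta (hGR : IsGaloisRing4 Δ ξ) (d e : Fq R) :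
    -(eta hGR d e) = eta hGR d (d + e) := by
  have h1 : -(eta hGR d e) = tau hGR d + (2 * tau hGR d + 2 * tau hGR e) := by
    rw [eta]
    linear_combination (-(tau hGR d) - tau hGR e) * hGR.four_eq_zero
  rw [h1, two_tau_add hGR, eta]

end arith

section field

variable (hΔ : 1 < Δ)

lemma one_ne_zeroF (hGR : IsGaloisRing4 Δ ξ) : (1 : Fq R) ≠ 0 := by
  intro h
  have h1 : rh (1 : R) = rh (0 : R) := by rw [map_one, map_zero]; exact h
  exact one_ne_zeroR hGR (rh_inj_T hGR T_one T_zero h1)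

lemma isfieldF (hΔ : 1 < Δ) (hGR : IsGaloisRing4 Δ ξ) : IsField (Fq R) := by
  refine ⟨⟨0, 1, fun h => one_ne_zeroF hGR h.symm⟩, mul_comm, ?_⟩
  intro a ha
  obtain ⟨t, htT, ht⟩ := rh_surj_T hGR a
  have ht0 : t ≠ 0 := by
    rintro rfl; rw [map_zero] at ht; exact ha ht.symm
  obtain ⟨b, hbT, hb⟩ := T_unit hΔ hGR htT ht0
  exact ⟨rh b, by rw [← ht, ← map_mul, hb, map_one]⟩

lemma cardF (hGR : IsGaloisRing4 Δ ξ) : Nat.card (Fq R) = 2 ^ Δ := by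
  have hbij : Function.Bijective (fun p : Fq R × Fq R => eta hGR p.1 p.2) := by
    constructor
    · rintro ⟨d, e⟩ ⟨d', e'⟩ h
      obtain ⟨h1, h2⟩ := eta_inj hGR h
      exact Prod.ext h1 h2
    · intro A
      obtain ⟨d, e, h⟩ := eta_surj hGR A
      exact ⟨(d, e), h.symm⟩
  have hcard : Nat.card (Fq R × Fq R) = 4 ^ Δ := by
    rw [Nat.card_eq_of_bijective _ hbij, hGR.card]
  rw [Nat.card_prod] at hcard
  have h4 : (4:ℕ) ^ Δ = 2 ^ Δ * 2 ^ Δ := by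
    rw [← mul_pow]; norm_num
  apply Nat.mul_self_inj.mp
  rw [hcard, h4]

lemma factA (hΔ : 1 < Δ) (hΔodd : Odd Δ) (hGR : IsGaloisRing4 Δ ξ) (z : Fq R) :
    z * z + z ≠ 1 := by
  intro h
  letI : Field (Fq R) := (isfieldF hΔ hGR).toField
  haveI : Finite R := finiteR hGR
  haveI : Finite (Fq R) := Finite.of_surjective rh Ideal.Quotient.mk_surjective
  haveI : Fintype (Fq R) := Fintype.ofFinite _
  have hz0 : z ≠ 0 := by rintro rfl; exact one_ne_zeroF hGR (by linear_combination -h)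
  have hz1 : z ≠ 1 := by rintro rfl; exact one_ne_zeroF hGR (by linear_combination h)
  have hz3 : z ^ 3 = 1 := by
    linear_combination (z + 1) * h - (z * z) * (charF (R := R))
  haveI : Fact (Nat.Prime 3) := ⟨by norm_num⟩
  have hord : orderOf z = 3 := orderOf_eq_prime hz3 hz1
  have hpow : z ^ (Fintype.card (Fq R) - 1) = 1 :=
    FiniteField.pow_card_sub_one_eq_one z hz0
  have hdvd : (3:ℕ) ∣ Fintype.card (Fq R) - 1 := hord ▸ orderOf_dvd_of_pow_eq_one hpow
  rw [← Nat.card_eq_fintype_card, cardF hGR] at hdvd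
  have h4k : ∀ k : ℕ, (4:ℕ) ^ k % 3 = 1 := by
    intro k
    induction k with
    | zero => rfl
    | succ n ih => rw [pow_succ]; omega
  obtain ⟨k, hk⟩ := hΔodd
  have h4k := h4k k
  have h2d : (2:ℕ) ^ Δ = 4 ^ k * 2 := by
    rw [hk, pow_succ, pow_mul]; norm_num
  have hmod : (2:ℕ) ^ Δ % 3 = 2 := by rw [h2d]; omega
  have h1le : 1 ≤ 2 ^ Δ := Nat.one_le_two_pow
  obtain ⟨m, hm⟩ := hdvd
  omega

lemma AS_cover (hΔ : 1 < Δ) (hΔodd : Odd Δ) (hGR : IsGaloisRing4 Δ ξ) (v : Fq R) :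
    (∃ r : Fq R, r * r + r = v) ∨ (∃ r : Fq R, r * r + r = v + 1) := by
  letI : Field (Fq R) := (isfieldF hΔ hGR).toField
  haveI : Finite R := finiteR hGR
  haveI : Finite (Fq R) := Finite.of_surjective rh Ideal.Quotient.mk_surjective
  set φ : Fq R →+ Fq R :=
    { toFun := fun x => x * x + x
      map_zero' := by ring
      map_add' := fun x y => by linear_combination (x * y) * (charF (R := R)) } with hφ
  have hker : ((AddMonoidHom.ker φ : AddSubgroup (Fq R)) : Set (Fq R)) = {0, 1} := by
    ext x
    simp only [SetLike.mem_coe, AddMonoidHom.mem_ker, hφ, AddMonoidHom.coe_mk,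
      ZeroHom.coe_mk, Set.mem_insert_iff, Set.mem_singleton_iff]
    constructor
    · intro hx
      have : x * (x + 1) = 0 := by linear_combination hx
      rcases mul_eq_zero.mp this with h | h
      · left; exact h
      · right
        linear_combination h + negF (R := R) 1
    · rintro (rfl | rfl)
      · ring
      · linear_combination charF (R := R)
  have hkcard : Nat.card (AddMonoidHom.ker φ) = 2 := by
    have e : Nat.card (AddMonoidHom.ker φ) = Nat.card (({0, 1} : Set (Fq R))) :=
      Nat.card_congr (Equiv.setCongr hker)
    rw [e, Nat.card_coe_set_eq, Set.ncard_pair (zero_ne_one (α := Fq R))]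
  set S : Set (Fq R) := Set.range (fun x : Fq R => x * x + x) with hS
  have hrange : ((AddMonoidHom.range φ : AddSubgroup (Fq R)) : Set (Fq R)) = S := by
    ext x
    simp [hφ, S, AddMonoidHom.mem_range, Set.mem_range]
  have hScard : 2 * S.ncard = Nat.card (Fq R) := by
    have h1 : Nat.card (Fq R) = Nat.card (Fq R ⧸ AddMonoidHom.ker φ) *
        Nat.card (AddMonoidHom.ker φ) :=
      AddSubgroup.card_eq_card_quotient_mul_card_addSubgroup _
    have h2 : Nat.card (Fq R ⧸ AddMonoidHom.ker φ) = Nat.card (AddMonoidHom.range φ) :=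
      Nat.card_congr (QuotientAddGroup.quotientKerEquivRange φ).toEquiv
    have h3 : Nat.card (AddMonoidHom.range φ) = S.ncard := by
      have e : Nat.card (AddMonoidHom.range φ) = Nat.card S :=
        Nat.card_congr (Equiv.setCongr hrange)
      rw [e, Nat.card_coe_set_eq]
    rw [h1, h2, h3, hkcard]; ring
  set B : Set (Fq R) := (fun v => v + 1) '' S with hB
  have hdisj : Disjoint S B := by
    rw [Set.disjoint_left]
    rintro v ⟨r, hr⟩ ⟨w, ⟨r', hr'⟩, hw⟩
    apply factA hΔ hΔodd hGR (r + r')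
    have hc := charF (R := R)
    linear_combination hr + hr' + hw + (r * r' + v - 1) * hc
  have hBcard : B.ncard = S.ncard := Set.ncard_image_of_injective _ (add_left_injective 1)
  have hcover : S ∪ B = Set.univ := by
    apply Set.eq_of_subset_of_ncard_le (Set.subset_univ _) _ (Set.toFinite _)
    rw [Set.ncard_univ, Set.ncard_union_eq hdisj, hBcard]
    omega
  have hv : v ∈ S ∪ B := by rw [hcover]; trivial
  rcases hv with ⟨r, hr⟩ | ⟨w, ⟨r, hr⟩, hw⟩
  · exact Or.inl ⟨r, hr⟩
  · refine Or.inr ⟨r, ?_⟩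
    have hc := charF (R := R)
    linear_combination hr + hw - hc

end field

section cells

variable (hΔ : 1 < Δ) (hGR : IsGaloisRing4 Δ ξ)

noncomputable def sfn (hΔ : 1 < Δ) (hGR : IsGaloisRing4 Δ ξ) (α β : Fq R) : Fq R :=
  fsqrt hΔ hGR (α * α + α * β + β * β)

noncomputable def Xel (hΔ : 1 < Δ) (hGR : IsGaloisRing4 Δ ξ) (α β : Fq R) : R :=
  eta hGR α (sfn hΔ hGR α β)

noncomputable def Ctri (hGR : IsGaloisRing4 Δ ξ) (α : Fq R) : Set R :=
  {tau hGR α, 2 * tau hGR α, 3 * tau hGR α}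

noncomputable def Csix (hΔ : 1 < Δ) (hGR : IsGaloisRing4 Δ ξ) (α β : Fq R) : Set R :=
  {Xel hΔ hGR α β, Xel hΔ hGR β α,
    -(Xel hΔ hGR α β) - Xel hΔ hGR β α, -(Xel hΔ hGR α β), -(Xel hΔ hGR β α),
    Xel hΔ hGR α β + Xel hΔ hGR β α}

lemma s_sym (α β : Fq R) : sfn hΔ hGR α β = sfn hΔ hGR β α := by
  unfold sfn; congr 1; ring

lemma s_rot (α β : Fq R) : sfn hΔ hGR α (α + β) = sfn hΔ hGR α β := by
  unfold sfn
  congr 1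
  linear_combination (α * α + α * β) * (charF (R := R))

lemma s_sq (α β : Fq R) :
    sfn hΔ hGR α β * sfn hΔ hGR α β = α * α + α * β + β * β := fsqrt_sq hΔ hGR _

lemma s_eq_gamma_add (α β : Fq R) :
    sfn hΔ hGR α β = (α + β) + fsqrt hΔ hGR (α * β) := by
  apply fsqrt_unique
  have hf := fsqrt_sq hΔ hGR (α * β)
  linear_combination hf + (α * β + (α + β) * fsqrt hΔ hGR (α * β)) * (charF (R := R))

lemma sixsum (α β : Fq R) :
    Xel hΔ hGR α β + Xel hΔ hGR β α + eta hGR (α + β) (sfn hΔ hGR α β) = 0 := by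
  set s := sfn hΔ hGR α β with hs
  set f := fsqrt hΔ hGR (α * β) with hf
  have hkey : (α + β) + f + s = 0 := by
    rw [hs, s_eq_gamma_add hΔ hGR]
    linear_combination addselfF ((α + β) + f)
  have h1 : tau hGR α + tau hGR β =
      tau hGR (α + β) + 2 * tau hGR f := by
    have := carry hΔ hGR (tau_mem hGR α) (tau_mem hGR β)
    rwa [rh_tau hGR, rh_tau hGR] at this
  have hbig : 2 * (tau hGR (α + β) + tau hGR f + tau hGR s) = 0 := by
    have h2 : rh (tau hGR (α + β) + tau hGR f + tau hGR s)
        = rh (tau hGR ((α + β) + f + s)) := by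
      simp only [map_add, rh_tau]
    have := two_congr hGR h2
    rw [hkey, tau_zero hGR] at this
    rw [this]; ring
  have hfour : (4 : R) * tau hGR s = 0 := by
    linear_combination (tau hGR s) * hGR.four_eq_zero
  rw [Xel, Xel, ← s_sym hΔ hGR α β, eta, eta, eta]
  linear_combination h1 + hbig + hfour

lemma ctri_coords (α : Fq R) :
    Ctri hGR α = {eta hGR α 0, eta hGR 0 α, eta hGR α α} := by
  have e1 : eta hGR α 0 = tau hGR α := by rw [eta, tau_zero hGR]; ring
  have e2 : eta hGR 0 α = 2 * tau hGR α := by rw [eta, tau_zero hGR]; ring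
  have e3 : eta hGR α α = 3 * tau hGR α := by rw [eta]; ring
  rw [Ctri, e1, e2, e3]

lemma csix_coords (α β : Fq R) :
    Csix hΔ hGR α β = {eta hGR α (sfn hΔ hGR α β), eta hGR β (sfn hΔ hGR α β),
      eta hGR (α + β) (sfn hΔ hGR α β),
      eta hGR α (α + sfn hΔ hGR α β), eta hGR β (β + sfn hΔ hGR α β),
      eta hGR (α + β) ((α + β) + sfn hΔ hGR α β)} := by
  set s := sfn hΔ hGR α β with hs
  have hx : Xel hΔ hGR α β = eta hGR α s := rfl
  have hy : Xel hΔ hGR β α = eta hGR β s := by rw [Xel, ← s_sym hΔ hGR α β]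
  have hz : -(Xel hΔ hGR α β) - Xel hΔ hGR β α = eta hGR (α + β) s := by
    have := sixsum hΔ hGR α β
    rw [← hs] at this
    linear_combination -this
  have hnx : -(Xel hΔ hGR α β) = eta hGR α (α + s) := by rw [hx, neg_eta hGR]
  have hny : -(Xel hΔ hGR β α) = eta hGR β (β + s) := by rw [hy, neg_eta hGR]
  have hxy : Xel hΔ hGR α β + Xel hΔ hGR β α = eta hGR (α + β) ((α + β) + s) := by
    rw [← neg_eta hGR, ← hz]; ring
  rw [Csix, hz, hnx, hny, hxy, hx, hy]

lemma csix_swap (α β : Fq R) : Csix hΔ hGR β α = Csix hΔ hGR α β := by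
  rw [csix_coords, csix_coords, ← s_sym hΔ hGR α β,
    show β + α = α + β from add_comm β α]
  ext A
  simp only [Set.mem_insert_iff, Set.mem_singleton_iff]
  tauto

lemma csix_rot (α β : Fq R) : Csix hΔ hGR α (α + β) = Csix hΔ hGR α β := by
  have hγ : α + (α + β) = β := by linear_combination α * (charF (R := R))
  rw [csix_coords, csix_coords, s_rot hΔ hGR α β, hγ]
  ext A
  simp only [Set.mem_insert_iff, Set.mem_singleton_iff]
  tauto

end cells

section crux

variable {hΔ : 1 < Δ}

lemma gamma_ne_zero (hΔ : 1 < Δ) (hGR : IsGaloisRing4 Δ ξ) {α β : Fq R} (hne : α ≠ β) :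
    α + β ≠ 0 := by
  intro h
  have : α = β := by linear_combination h - β * (charF (R := R))
  exact hne this

lemma factA' (hΔ : 1 < Δ) (hΔodd : Odd Δ) (hGR : IsGaloisRing4 Δ ξ) {α β : Fq R}
    (hα : α ≠ 0) (hβ : β ≠ 0) (hne : α ≠ β) : α * α + α * β + β * β ≠ 0 := by
  letI : Field (Fq R) := (isfieldF hΔ hGR).toField
  intro h
  apply factA hΔ hΔodd hGR (α / β)
  have hinv : β * β⁻¹ = 1 := mul_inv_cancel₀ hβ
  have hdiv : α / β = α * β⁻¹ := div_eq_mul_inv α β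
  rw [hdiv]
  linear_combination (β⁻¹ * β⁻¹) * h - (α * β⁻¹) * hinv - (β * β⁻¹ + 1) * hinv
    - charF (R := R)

lemma s_ne_zero (hΔ : 1 < Δ) (hΔodd : Odd Δ) (hGR : IsGaloisRing4 Δ ξ) {α β : Fq R}
    (hα : α ≠ 0) (hβ : β ≠ 0) (hne : α ≠ β) : sfn hΔ hGR α β ≠ 0 := by
  intro h
  rw [sfn, fsqrt_eq_zero_iff] at h
  exact factA' hΔ hΔodd hGR hα hβ hne h

lemma s_ne_col (hΔ : 1 < Δ) (hΔodd : Odd Δ) (hGR : IsGaloisRing4 Δ ξ) {α β : Fq R}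
    (hα : α ≠ 0) (hβ : β ≠ 0) (hne : α ≠ β) :
    sfn hΔ hGR α β ≠ α ∧ sfn hΔ hGR α β ≠ β ∧ sfn hΔ hGR α β ≠ α + β := by
  letI : Field (Fq R) := (isfieldF hΔ hGR).toField
  have hsq := s_sq hΔ hGR α β
  refine ⟨?_, ?_, ?_⟩
  · intro h
    rw [h] at hsq
    have : β * (α + β) = 0 := by linear_combination -hsq
    rcases mul_eq_zero.mp this with h' | h'
    · exact hβ h'
    · exact gamma_ne_zero hΔ hGR hne h'
  · intro h
    rw [h] at hsq
    have : α * (α + β) = 0 := by linear_combination -hsq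
    rcases mul_eq_zero.mp this with h' | h'
    · exact hα h'
    · exact gamma_ne_zero hΔ hGR hne h'
  · intro h
    rw [h] at hsq
    have : α * β = 0 := by
      linear_combination hsq
    rcases mul_eq_zero.mp this with h' | h'
    · exact hα h'
    · exact hβ h'

lemma crux_exist (hΔ : 1 < Δ) (hΔodd : Odd Δ) (hGR : IsGaloisRing4 Δ ξ) {δ ε : Fq R}
    (hδ : δ ≠ 0) (hε : ε ≠ 0) (hne : ε ≠ δ) :
    ∃ β : Fq R, β ≠ 0 ∧ β ≠ δ ∧
      (ε = sfn hΔ hGR δ β ∨ ε = δ + sfn hΔ hGR δ β) := by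
  letI : Field (Fq R) := (isfieldF hΔ hGR).toField
  set u : Fq R := ε / δ with hu
  have hεu : ε = u * δ := by rw [hu]; field_simp
  have hu0 : u ≠ 0 := by
    intro h; rw [h, zero_mul] at hεu; exact hε hεu
  have hu1 : u ≠ 1 := by
    intro h; rw [h, one_mul] at hεu; exact hne hεu
  rcases AS_cover hΔ hΔodd hGR (u * u) with ⟨r, hr⟩ | ⟨r, hr⟩
  · -- r*r + r = u*u ; then ε = δ + s
    have hrr0 : r * r + r ≠ 0 := by
      rw [hr]; intro h
      exact hu0 (sq_injF hΔ hGR (by linear_combination h))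
    have hr0 : r ≠ 0 := by rintro rfl; apply hrr0; ring
    have hr1 : r ≠ 1 := by rintro rfl; apply hrr0; linear_combination charF (R := R)
    refine ⟨r * δ, mul_ne_zero hr0 hδ, ?_, Or.inr ?_⟩
    · intro h
      have h' : r * δ = 1 * δ := by rw [one_mul]; exact h
      exact hr1 (mul_right_cancel₀ hδ h')
    · have hseq : sfn hΔ hGR δ (r * δ) = ε + δ := by
        apply fsqrt_unique
        rw [hεu]
        linear_combination (-(δ * δ)) * hr + (u * δ * δ) * (charF (R := R))
      rw [hseq]
      linear_combination -(charF (R := R)) * δ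
  · -- r*r + r = u*u + 1 ; then ε = s
    have hrr0 : r * r + r ≠ 0 := by
      rw [hr]; intro h
      apply hu1
      apply sq_injF hΔ hGR
      linear_combination h - charF (R := R)
    have hr0 : r ≠ 0 := by rintro rfl; apply hrr0; ring
    have hr1 : r ≠ 1 := by rintro rfl; apply hrr0; linear_combination charF (R := R)
    refine ⟨r * δ, mul_ne_zero hr0 hδ, ?_, Or.inl ?_⟩
    · intro h
      have h' : r * δ = 1 * δ := by rw [one_mul]; exact h
      exact hr1 (mul_right_cancel₀ hδ h')
    · have hseq : sfn hΔ hGR δ (r * δ) = ε := by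
        apply fsqrt_unique
        rw [hεu]
        linear_combination (-(δ * δ)) * hr - (δ * δ) * (charF (R := R))
      rw [hseq]

lemma crux_unique_col (hΔ : 1 < Δ) (hΔodd : Odd Δ) (hGR : IsGaloisRing4 Δ ξ)
    {δ ε β β' : Fq R} (hδ : δ ≠ 0) (hβ : β ≠ 0) (hβδ : β ≠ δ) (hβ' : β' ≠ 0)
    (hβδ' : β' ≠ δ)
    (h1 : ε = sfn hΔ hGR δ β ∨ ε = δ + sfn hΔ hGR δ β)
    (h2 : ε = sfn hΔ hGR δ β' ∨ ε = δ + sfn hΔ hGR δ β') :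
    Csix hΔ hGR δ β = Csix hΔ hGR δ β' := by
  letI : Field (Fq R) := (isfieldF hΔ hGR).toField
  have hsq := s_sq hΔ hGR δ β
  have hsq' := s_sq hΔ hGR δ β'
  have hcase : sfn hΔ hGR δ β = sfn hΔ hGR δ β' ∨
      sfn hΔ hGR δ β = δ + sfn hΔ hGR δ β' := by
    rcases h1 with rfl | h1 <;> rcases h2 with h2 | h2
    · exact Or.inl h2
    · exact Or.inr h2
    · right; rw [h1] at h2; linear_combination h2 - δ * (charF (R := R))
    · left; rw [h1] at h2; linear_combination h2
  rcases hcase with hc | hc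
  · -- s = s' : β' = β or β' = δ + β
    rw [hc] at hsq
    have : (β + β') * (β + β' + δ) = 0 := by
      linear_combination hsq' - hsq + (β * β' + β' * β' + δ * β') * (charF (R := R))
    rcases mul_eq_zero.mp this with h | h
    · have : β = β' := by linear_combination h - β' * (charF (R := R))
      rw [this]
    · have hββ' : β' = δ + β := by
        linear_combination h - (β + δ) * (charF (R := R))
      rw [hββ']
      exact (csix_rot hΔ hGR δ β).symm
  · -- s = δ + s' : contradiction
    exfalso
    apply factA hΔ hΔodd hGR ((β + β') / δ)
    have hkey : (β + β') * (β + β') + (β + β') * δ = δ * δ := by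
      have h3 : sfn hΔ hGR δ β * sfn hΔ hGR δ β =
          δ * δ + sfn hΔ hGR δ β' * sfn hΔ hGR δ β' := by
        rw [hc]
        linear_combination (δ * sfn hΔ hGR δ β') * (charF (R := R))
      rw [hsq, hsq'] at h3
      linear_combination h3 + (β * β' + β' * β' + δ * β') * (charF (R := R))
    have hinv : δ * δ⁻¹ = 1 := mul_inv_cancel₀ hδ
    have hdiv : (β + β') / δ = (β + β') * δ⁻¹ := div_eq_mul_inv _ δ
    rw [hdiv]
    linear_combination (δ⁻¹ * δ⁻¹) * hkey - ((β + β') * δ⁻¹) * hinv + (δ * δ⁻¹ + 1) * hinv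

end crux

section memb

lemma eta_eq_iff (hGR : IsGaloisRing4 Δ ξ) {d e d' e' : Fq R} :
    eta hGR d e = eta hGR d' e' ↔ d = d' ∧ e = e' := by
  constructor
  · exact eta_inj hGR
  · rintro ⟨rfl, rfl⟩; rfl

lemma mem_ctri_iff (hGR : IsGaloisRing4 Δ ξ) {d e α : Fq R} :
    eta hGR d e ∈ Ctri hGR α ↔
      (d = α ∧ e = 0) ∨ (d = 0 ∧ e = α) ∨ (d = α ∧ e = α) := by
  rw [ctri_coords]
  simp only [Set.mem_insert_iff, Set.mem_singleton_iff, eta_eq_iff hGR]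

lemma mem_csix_iff (hΔ : 1 < Δ) (hGR : IsGaloisRing4 Δ ξ) {d e α β : Fq R} :
    eta hGR d e ∈ Csix hΔ hGR α β ↔
      (d = α ∧ e = sfn hΔ hGR α β) ∨ (d = β ∧ e = sfn hΔ hGR α β) ∨
      (d = α + β ∧ e = sfn hΔ hGR α β) ∨
      (d = α ∧ e = α + sfn hΔ hGR α β) ∨ (d = β ∧ e = β + sfn hΔ hGR α β) ∨
      (d = α + β ∧ e = (α + β) + sfn hΔ hGR α β) := by
  rw [csix_coords]
  simp only [Set.mem_insert_iff, Set.mem_singleton_iff, eta_eq_iff hGR]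

-- properties of six-cell coordinates
lemma sixcoord_prop (hΔ : 1 < Δ) (hΔodd : Odd Δ) (hGR : IsGaloisRing4 Δ ξ)
    {d e α β : Fq R} (hα : α ≠ 0) (hβ : β ≠ 0) (hne : α ≠ β)
    (h : eta hGR d e ∈ Csix hΔ hGR α β) : d ≠ 0 ∧ e ≠ 0 ∧ e ≠ d := by
  have hγ0 : α + β ≠ 0 := gamma_ne_zero hΔ hGR hne
  have hs0 : sfn hΔ hGR α β ≠ 0 := s_ne_zero hΔ hΔodd hGR hα hβ hne
  obtain ⟨hsα, hsβ, hsγ⟩ := s_ne_col hΔ hΔodd hGR hα hβ hne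
  have hchar : ∀ u v : Fq R, u + v = u → v = 0 := fun u v h => by linear_combination h
  have hchar2 : ∀ u v : Fq R, u + v = 0 → v = u := fun u v h => by
    linear_combination h - u * (charF (R := R))
  rw [mem_csix_iff hΔ hGR] at h
  rcases h with ⟨rfl, rfl⟩ | ⟨rfl, rfl⟩ | ⟨rfl, rfl⟩ | ⟨rfl, rfl⟩ | ⟨rfl, rfl⟩ | ⟨rfl, rfl⟩
  · exact ⟨hα, hs0, fun h => hsα h⟩
  · exact ⟨hβ, hs0, fun h => hsβ h⟩
  · exact ⟨hγ0, hs0, fun h => hsγ h⟩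
  · refine ⟨hα, fun h => hsα (hchar2 _ _ h), fun h => hs0 (hchar _ _ h)⟩
  · refine ⟨hβ, fun h => hsβ (hchar2 _ _ h), fun h => hs0 (hchar _ _ h)⟩
  · refine ⟨hγ0, fun h => hsγ (hchar2 _ _ h), fun h => hs0 (hchar _ _ h)⟩

lemma gamma_ne_left {α β : Fq R} (hβ : β ≠ 0) : α + β ≠ α := by
  intro h; exact hβ (by linear_combination h)

lemma gamma_ne_right (hΔ : 1 < Δ) (hGR : IsGaloisRing4 Δ ξ) {α β : Fq R} (hα : α ≠ 0) :
    α + β ≠ β := by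
  intro h; exact hα (by linear_combination h)

lemma ncard3gen {x1 x2 x3 : R} (h12 : x1 ≠ x2) (h13 : x1 ≠ x3) (h23 : x2 ≠ x3) :
    ({x1, x2, x3} : Set R).ncard = 3 := by
  rw [Set.ncard_insert_of_notMem (by simp [h12, h13]),
    Set.ncard_insert_of_notMem (by simp [h23]), Set.ncard_singleton]

lemma ncard6gen {x1 x2 x3 x4 x5 x6 : R} (h12 : x1 ≠ x2) (h13 : x1 ≠ x3) (h14 : x1 ≠ x4)
    (h15 : x1 ≠ x5) (h16 : x1 ≠ x6) (h23 : x2 ≠ x3) (h24 : x2 ≠ x4) (h25 : x2 ≠ x5)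
    (h26 : x2 ≠ x6) (h34 : x3 ≠ x4) (h35 : x3 ≠ x5) (h36 : x3 ≠ x6) (h45 : x4 ≠ x5)
    (h46 : x4 ≠ x6) (h56 : x5 ≠ x6) :
    ({x1, x2, x3, x4, x5, x6} : Set R).ncard = 6 := by
  rw [Set.ncard_insert_of_notMem (by simp [h12, h13, h14, h15, h16]),
    Set.ncard_insert_of_notMem (by simp [h23, h24, h25, h26]),
    Set.ncard_insert_of_notMem (by simp [h34, h35, h36]),
    Set.ncard_insert_of_notMem (by simp [h45, h46]),
    Set.ncard_insert_of_notMem (by simp [h56]), Set.ncard_singleton]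

lemma ctri_ncard (hΔ : 1 < Δ) (hGR : IsGaloisRing4 Δ ξ) {α : Fq R} (hα : α ≠ 0) :
    (Ctri hGR α).ncard = 3 := by
  rw [ctri_coords]
  apply ncard3gen
  · rw [Ne, eta_eq_iff hGR]; rintro ⟨h1, -⟩; exact hα h1
  · rw [Ne, eta_eq_iff hGR]; rintro ⟨-, h2⟩; exact hα h2.symm
  · rw [Ne, eta_eq_iff hGR]; rintro ⟨h1, -⟩; exact hα h1.symm

lemma csix_ncard (hΔ : 1 < Δ) (hΔodd : Odd Δ) (hGR : IsGaloisRing4 Δ ξ) {α β : Fq R}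
    (hα : α ≠ 0) (hβ : β ≠ 0) (hne : α ≠ β) : (Csix hΔ hGR α β).ncard = 6 := by
  have hγα : α + β ≠ α := gamma_ne_left hβ
  have hγβ : α + β ≠ β := gamma_ne_right hΔ hGR hα
  have hγ0 : α + β ≠ 0 := gamma_ne_zero hΔ hGR hne
  rw [csix_coords]
  apply ncard6gen <;> rw [Ne, eta_eq_iff hGR]
  · rintro ⟨h1, -⟩; exact hne h1
  · rintro ⟨h1, -⟩; exact hγα h1.symm
  · rintro ⟨-, h2⟩; exact hα (by linear_combination -h2)
  · rintro ⟨h1, -⟩; exact hne h1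
  · rintro ⟨h1, -⟩; exact hγα h1.symm
  · rintro ⟨h1, -⟩; exact hγβ h1.symm
  · rintro ⟨h1, -⟩; exact hne h1.symm
  · rintro ⟨-, h2⟩; exact hβ (by linear_combination -h2)
  · rintro ⟨h1, -⟩; exact hγβ h1.symm
  · rintro ⟨h1, -⟩; exact hγα h1
  · rintro ⟨h1, -⟩; exact hγβ h1
  · rintro ⟨-, h2⟩; exact hγ0 (by linear_combination -h2)
  · rintro ⟨h1, -⟩; exact hne h1
  · rintro ⟨h1, -⟩; exact hγα h1.symm
  · rintro ⟨h1, -⟩; exact hγβ h1.symm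

end memb

section repr

lemma csix_repr (hΔ : 1 < Δ) (hΔodd : Odd Δ) (hGR : IsGaloisRing4 Δ ξ) {α β d e : Fq R}
    (hα : α ≠ 0) (hβ : β ≠ 0) (hne : α ≠ β) (hmem : eta hGR d e ∈ Csix hΔ hGR α β) :
    ∃ β₀ : Fq R, β₀ ≠ 0 ∧ β₀ ≠ d ∧ d ≠ 0 ∧ Csix hΔ hGR α β = Csix hΔ hGR d β₀ ∧
      (e = sfn hΔ hGR d β₀ ∨ e = d + sfn hΔ hGR d β₀) := by
  have hγα : α + β ≠ α := gamma_ne_left hβ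
  have hγβ : α + β ≠ β := gamma_ne_right hΔ hGR hα
  have hγ0 : α + β ≠ 0 := gamma_ne_zero hΔ hGR hne
  have hswap : Csix hΔ hGR α β = Csix hΔ hGR β α := (csix_swap hΔ hGR α β).symm
  have hrot : Csix hΔ hGR α β = Csix hΔ hGR α (α + β) := (csix_rot hΔ hGR α β).symm
  have hγα' : Csix hΔ hGR α β = Csix hΔ hGR (α + β) α := by
    rw [hrot]; exact (csix_swap hΔ hGR α (α + β)).symm
  have hsswap : sfn hΔ hGR α β = sfn hΔ hGR β α := s_sym hΔ hGR α β
  have hsrot : sfn hΔ hGR α β = sfn hΔ hGR α (α + β) := (s_rot hΔ hGR α β).symm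
  have hsγα : sfn hΔ hGR α β = sfn hΔ hGR (α + β) α := by
    rw [hsrot]; exact s_sym hΔ hGR α (α + β)
  rw [mem_csix_iff hΔ hGR] at hmem
  rcases hmem with ⟨rfl, rfl⟩ | ⟨rfl, rfl⟩ | ⟨rfl, rfl⟩ | ⟨rfl, rfl⟩ | ⟨rfl, rfl⟩ |
    ⟨rfl, rfl⟩
  · exact ⟨β, hβ, fun h => hne h.symm, hα, rfl, Or.inl rfl⟩
  · exact ⟨α, hα, hne, hβ, hswap, Or.inl (by rw [hsswap])⟩
  · exact ⟨α, hα, fun h => hγα h.symm, hγ0, hγα', Or.inl (by rw [hsγα])⟩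
  · exact ⟨β, hβ, fun h => hne h.symm, hα, rfl, Or.inr rfl⟩
  · exact ⟨α, hα, hne, hβ, hswap, Or.inr (by rw [hsswap])⟩
  · exact ⟨α, hα, fun h => hγα h.symm, hγ0, hγα', Or.inr (by rw [hsγα])⟩

lemma csix_eq_of_common (hΔ : 1 < Δ) (hΔodd : Odd Δ) (hGR : IsGaloisRing4 Δ ξ)
    {α β α' β' : Fq R} (hα : α ≠ 0) (hβ : β ≠ 0) (hne : α ≠ β)
    (hα' : α' ≠ 0) (hβ' : β' ≠ 0) (hne' : α' ≠ β') {A : R}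
    (h1 : A ∈ Csix hΔ hGR α β) (h2 : A ∈ Csix hΔ hGR α' β') :
    Csix hΔ hGR α β = Csix hΔ hGR α' β' := by
  obtain ⟨d, e, rfl⟩ := eta_surj hGR A
  obtain ⟨β₀, hb0, hb0d, hd0, hcell, hcond⟩ := csix_repr hΔ hΔodd hGR hα hβ hne h1
  obtain ⟨β₁, hb1, hb1d, -, hcell', hcond'⟩ := csix_repr hΔ hΔodd hGR hα' hβ' hne' h2
  rw [hcell, hcell']
  exact crux_unique_col hΔ hΔodd hGR hd0 hb0 hb0d hb1 hb1d hcond hcond'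

-- scaling lemmas
lemma xi_tau (hGR : IsGaloisRing4 Δ ξ) {x : R} (hx : x ∈ Teich ξ) (z : Fq R) :
    x * tau hGR z = tau hGR (rh x * z) := by
  apply (rh_inj_T hGR (T_mul hx (tau_mem hGR z)) (tau_mem hGR _) _)
  rw [map_mul, rh_tau, rh_tau]

lemma s_scale (hΔ : 1 < Δ) (hGR : IsGaloisRing4 Δ ξ) (lam α β : Fq R) :
    sfn hΔ hGR (lam * α) (lam * β) = lam * sfn hΔ hGR α β := by
  apply fsqrt_unique
  have := s_sq hΔ hGR α β
  linear_combination (lam * lam) * this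

lemma xel_scale (hΔ : 1 < Δ) (hGR : IsGaloisRing4 Δ ξ) {x : R} (hx : x ∈ Teich ξ)
    (α β : Fq R) :
    x * Xel hΔ hGR α β = Xel hΔ hGR (rh x * α) (rh x * β) := by
  rw [Xel, Xel, eta, eta, s_scale hΔ hGR, ← xi_tau hGR hx, ← xi_tau hGR hx]
  ring

lemma ctri_scale (hGR : IsGaloisRing4 Δ ξ) {x : R} (hx : x ∈ Teich ξ) (α : Fq R) :
    (fun y => x * y) '' Ctri hGR α = Ctri hGR (rh x * α) := by
  rw [Ctri, Ctri, Set.image_insert_eq, Set.image_insert_eq, Set.image_singleton]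
  rw [← xi_tau hGR hx]
  congr 1
  · congr 1
    · ring
    · rw [show x * (3 * tau hGR α) = 3 * (x * tau hGR α) from by ring]

lemma csix_scale (hΔ : 1 < Δ) (hGR : IsGaloisRing4 Δ ξ) {x : R} (hx : x ∈ Teich ξ)
    (α β : Fq R) :
    (fun y => x * y) '' Csix hΔ hGR α β = Csix hΔ hGR (rh x * α) (rh x * β) := by
  have ha := xel_scale hΔ hGR hx α β
  have hb := xel_scale hΔ hGR hx β α
  rw [Csix, Csix]
  rw [Set.image_insert_eq, Set.image_insert_eq, Set.image_insert_eq, Set.image_insert_eq,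
    Set.image_insert_eq, Set.image_singleton]
  rw [show x * (-(Xel hΔ hGR α β) - Xel hΔ hGR β α)
      = -(x * Xel hΔ hGR α β) - x * Xel hΔ hGR β α from by ring,
    show x * (-(Xel hΔ hGR α β)) = -(x * Xel hΔ hGR α β) from by ring,
    show x * (-(Xel hΔ hGR β α)) = -(x * Xel hΔ hGR β α) from by ring,
    show x * (Xel hΔ hGR α β + Xel hΔ hGR β α)
      = x * Xel hΔ hGR α β + x * Xel hΔ hGR β α from by ring,
    ha, hb]

end repr

end GR4

set_option maxHeartbeats 2000000 in
open GR4 in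
theorem exists_invariant_partition (Δ : ℕ) (hΔodd : Odd Δ) (hΔ : 1 < Δ)
    {R : Type*} [CommRing R] (ξ : R) (hGR : IsGaloisRing4 Δ ξ) :
    ∃ P : Set (Set R),
      ⋃₀ P = {x : R | x ≠ 0} ∧
      P.PairwiseDisjoint id ∧
      (∀ C ∈ P,
        (∃ a : R, C = {a, 2 * a, 3 * a} ∧ C.ncard = 3) ∨
        (∃ a b : R, C = {a, b, -a - b, -a, -b, a + b} ∧ C.ncard = 6)) ∧
      {C ∈ P | C.ncard = 3}.ncard = 2 ^ Δ - 1 ∧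
      {C ∈ P | C.ncard = 6}.ncard = (2 ^ Δ - 1) * (2 ^ Δ - 2) / 6 ∧
      (∀ x ∈ Teich ξ, x ≠ 0 → ∀ C ∈ P, (fun y => x * y) '' C ∈ P) := by
  classical
  haveI : Finite R := finiteR hGR
  haveI : Finite (Fq R) := Finite.of_surjective rh Ideal.Quotient.mk_surjective
  haveI : Fintype (Fq R) := Fintype.ofFinite _
  letI : Field (Fq R) := (isfieldF hΔ hGR).toField
  set P : Set (Set R) :=
    {C | (∃ α : Fq R, α ≠ 0 ∧ C = Ctri hGR α) ∨
         (∃ α β : Fq R, α ≠ 0 ∧ β ≠ 0 ∧ α ≠ β ∧ C = Csix hΔ hGR α β)} with hP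
  have hmemP : ∀ C : Set R, C ∈ P ↔
      (∃ α : Fq R, α ≠ 0 ∧ C = Ctri hGR α) ∨
      (∃ α β : Fq R, α ≠ 0 ∧ β ≠ 0 ∧ α ≠ β ∧ C = Csix hΔ hGR α β) := fun C => Iff.rfl
  have heta0 : ∀ α : Fq R, eta hGR α 0 = tau hGR α := by
    intro α; rw [eta, tau_zero hGR]; ring
  -- cells consist of nonzero elements
  have hnz : ∀ C ∈ P, ∀ A ∈ C, A ≠ 0 := by
    intro C hC A hA
    rcases (hmemP C).mp hC with ⟨α, hα, rfl⟩ | ⟨α, β, hα, hβ, hne, rfl⟩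
    · obtain ⟨d, e, rfl⟩ := eta_surj hGR A
      rw [mem_ctri_iff hGR] at hA
      intro h0
      rw [eta_eq_zero_iff hGR] at h0
      obtain ⟨rfl, rfl⟩ := h0
      rcases hA with ⟨h1, -⟩ | ⟨-, h2⟩ | ⟨h1, -⟩
      · exact hα h1.symm
      · exact hα h2.symm
      · exact hα h1.symm
    · obtain ⟨d, e, rfl⟩ := eta_surj hGR A
      obtain ⟨hd, -, -⟩ := sixcoord_prop hΔ hΔodd hGR hα hβ hne hA
      intro h0
      rw [eta_eq_zero_iff hGR] at h0
      exact hd h0.1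
  refine ⟨P, ?_, ?_, ?_, ?_, ?_, ?_⟩
  · -- union
    ext A
    simp only [Set.mem_sUnion, Set.mem_setOf_eq]
    constructor
    · rintro ⟨C, hC, hAC⟩
      exact hnz C hC A hAC
    · intro hA
      obtain ⟨d, e, rfl⟩ := eta_surj hGR A
      have hde : ¬(d = 0 ∧ e = 0) := fun h => hA ((eta_eq_zero_iff hGR).mpr h)
      by_cases hd : d = 0
      · have he : e ≠ 0 := fun h => hde ⟨hd, h⟩
        refine ⟨Ctri hGR e, (hmemP _).mpr (Or.inl ⟨e, he, rfl⟩), ?_⟩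
        rw [hd, mem_ctri_iff hGR]
        exact Or.inr (Or.inl ⟨rfl, rfl⟩)
      · by_cases he : e = 0
        · refine ⟨Ctri hGR d, (hmemP _).mpr (Or.inl ⟨d, hd, rfl⟩), ?_⟩
          rw [he, mem_ctri_iff hGR]
          exact Or.inl ⟨rfl, rfl⟩
        · by_cases hed : e = d
          · refine ⟨Ctri hGR d, (hmemP _).mpr (Or.inl ⟨d, hd, rfl⟩), ?_⟩
            rw [hed, mem_ctri_iff hGR]
            exact Or.inr (Or.inr ⟨rfl, rfl⟩)
          · obtain ⟨β, hβ0, hβd, hcond⟩ := crux_exist hΔ hΔodd hGR hd he hed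
            refine ⟨Csix hΔ hGR d β, (hmemP _).mpr
              (Or.inr ⟨d, β, hd, hβ0, Ne.symm hβd, rfl⟩), ?_⟩
            rw [mem_csix_iff hΔ hGR]
            rcases hcond with h | h
            · exact Or.inl ⟨rfl, h⟩
            · exact Or.inr (Or.inr (Or.inr (Or.inl ⟨rfl, h⟩)))
  · -- pairwise disjoint
    intro C hC C' hC' hCC'
    simp only [Function.onFun, id]
    rw [Set.disjoint_left]
    intro A hAC hAC'
    apply hCC'
    rcases (hmemP C).mp hC with ⟨α, hα, rfl⟩ | ⟨α, β, hα, hβ, hne, rfl⟩ <;>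
      rcases (hmemP C').mp hC' with ⟨α', hα', rfl⟩ | ⟨α', β', hα', hβ', hne', rfl⟩
    · -- tri / tri
      obtain ⟨d, e, rfl⟩ := eta_surj hGR A
      rw [mem_ctri_iff hGR] at hAC hAC'
      have : α = α' := by
        rcases hAC with ⟨rfl, rfl⟩ | ⟨rfl, rfl⟩ | ⟨rfl, rfl⟩ <;>
          rcases hAC' with ⟨h1, h2⟩ | ⟨h1, h2⟩ | ⟨h1, h2⟩ <;>
          first
            | exact h1
            | exact h2
            | exact absurd h1 hα
            | exact absurd h2 hα
      rw [this]
    · -- tri / six : impossible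
      exfalso
      obtain ⟨d, e, rfl⟩ := eta_surj hGR A
      obtain ⟨hd, he, hed⟩ := sixcoord_prop hΔ hΔodd hGR hα' hβ' hne' hAC'
      rw [mem_ctri_iff hGR] at hAC
      rcases hAC with ⟨-, rfl⟩ | ⟨rfl, -⟩ | ⟨rfl, rfl⟩
      · exact he rfl
      · exact hd rfl
      · exact hed rfl
    · -- six / tri : impossible
      exfalso
      obtain ⟨d, e, rfl⟩ := eta_surj hGR A
      obtain ⟨hd, he, hed⟩ := sixcoord_prop hΔ hΔodd hGR hα hβ hne hAC
      rw [mem_ctri_iff hGR] at hAC'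
      rcases hAC' with ⟨-, rfl⟩ | ⟨rfl, -⟩ | ⟨rfl, rfl⟩
      · exact he rfl
      · exact hd rfl
      · exact hed rfl
    · -- six / six
      exact csix_eq_of_common hΔ hΔodd hGR hα hβ hne hα' hβ' hne' hAC hAC'
  · -- forms
    intro C hC
    rcases (hmemP C).mp hC with ⟨α, hα, rfl⟩ | ⟨α, β, hα, hβ, hne, rfl⟩
    · exact Or.inl ⟨tau hGR α, rfl, ctri_ncard hΔ hGR hα⟩
    · exact Or.inr ⟨Xel hΔ hGR α β, Xel hΔ hGR β α, rfl,
        csix_ncard hΔ hΔodd hGR hα hβ hne⟩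
  · -- count of triples
    set S1 : Finset (Fq R) := Finset.univ.erase 0 with hS1
    have hS1card : S1.card = 2 ^ Δ - 1 := by
      rw [hS1, Finset.card_erase_of_mem (Finset.mem_univ 0), Finset.card_univ,
        ← Nat.card_eq_fintype_card, cardF hGR]
    set PtriF : Finset (Set R) := S1.image (fun α => Ctri hGR α) with hPtriF
    have hinj : Set.InjOn (fun α => Ctri hGR α) ↑S1 := by
      intro α hαm α' hα'm h
      have hα : α ≠ 0 := by simp [hS1] at hαm; exact hαm
      have hα' : α' ≠ 0 := by simp [hS1] at hα'm; exact hα'm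
      have h' : Ctri hGR α = Ctri hGR α' := h
      have hmem : eta hGR α 0 ∈ Ctri hGR α' := by
        rw [← h', heta0 α, Ctri]
        exact Set.mem_insert _ _
      rw [mem_ctri_iff hGR] at hmem
      rcases hmem with ⟨h1, -⟩ | ⟨h1, -⟩ | ⟨h1, -⟩
      · exact h1
      · exact absurd h1 hα
      · exact h1
    have hseteq : {C ∈ P | C.ncard = 3} = ↑PtriF := by
      ext C
      simp only [Set.mem_sep_iff, hPtriF, Finset.coe_image, Set.mem_image,
        Finset.mem_coe]
      constructor
      · rintro ⟨hCP, hc3⟩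
        rcases (hmemP C).mp hCP with ⟨α, hα, rfl⟩ | ⟨α, β, hα, hβ, hne, rfl⟩
        · exact ⟨α, by simp [hS1, hα], rfl⟩
        · rw [csix_ncard hΔ hΔodd hGR hα hβ hne] at hc3
          exact absurd hc3 (by norm_num)
      · rintro ⟨α, hαm, rfl⟩
        have hα : α ≠ 0 := by simp [hS1] at hαm; exact hαm
        exact ⟨(hmemP _).mpr (Or.inl ⟨α, hα, rfl⟩), ctri_ncard hΔ hGR hα⟩
    rw [hseteq, Set.ncard_coe_finset, hPtriF, Finset.card_image_of_injOn hinj, hS1card]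
  · -- count of sixtuples
    set S1 : Finset (Fq R) := Finset.univ.erase 0 with hS1
    have hS1card : S1.card = 2 ^ Δ - 1 := by
      rw [hS1, Finset.card_erase_of_mem (Finset.mem_univ 0), Finset.card_univ,
        ← Nat.card_eq_fintype_card, cardF hGR]
    set D : Finset (Fq R × Fq R) := (S1 ×ˢ S1).filter (fun p => p.1 ≠ p.2) with hD
    have hmemD : ∀ p : Fq R × Fq R, p ∈ D ↔ p.1 ≠ 0 ∧ p.2 ≠ 0 ∧ p.1 ≠ p.2 := by
      intro p
      simp [hD, hS1, Finset.mem_filter, Finset.mem_product, and_assoc]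
    set PsixF : Finset (Set R) := D.image (fun p => Csix hΔ hGR p.1 p.2) with hPsixF
    have hseteq : {C ∈ P | C.ncard = 6} = ↑PsixF := by
      ext C
      simp only [Set.mem_sep_iff, hPsixF, Finset.coe_image, Set.mem_image,
        Finset.mem_coe]
      constructor
      · rintro ⟨hCP, hc6⟩
        rcases (hmemP C).mp hCP with ⟨α, hα, rfl⟩ | ⟨α, β, hα, hβ, hne, rfl⟩
        · rw [ctri_ncard hΔ hGR hα] at hc6
          exact absurd hc6 (by norm_num)
        · exact ⟨(α, β), (hmemD (α, β)).mpr ⟨hα, hβ, hne⟩, rfl⟩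
      · rintro ⟨⟨α, β⟩, hpD, rfl⟩
        obtain ⟨hα, hβ, hne⟩ := (hmemD (α, β)).mp hpD
        exact ⟨(hmemP _).mpr (Or.inr ⟨α, β, hα, hβ, hne, rfl⟩),
          csix_ncard hΔ hΔodd hGR hα hβ hne⟩
    have hfib : ∀ C ∈ PsixF,
        (D.filter (fun p => Csix hΔ hGR p.1 p.2 = C)).card = 6 := by
      intro C hC
      obtain ⟨⟨α, β⟩, hpD, rfl⟩ := Finset.mem_image.mp hC
      obtain ⟨hα, hβ, hne⟩ := (hmemD (α, β)).mp hpD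
      have hγ0 : α + β ≠ 0 := gamma_ne_zero hΔ hGR hne
      have hγα : α + β ≠ α := gamma_ne_left hβ
      have hγβ : α + β ≠ β := gamma_ne_right hΔ hGR hα
      have hAB : α ≠ β := hne
      have hBA : β ≠ α := hne.symm
      have hAG : α ≠ α + β := hγα.symm
      have hBG : β ≠ α + β := hγβ.symm
      have hGA : α + β ≠ α := hγα
      have hGB : α + β ≠ β := hγβ
      -- perm cells
      have cswap : Csix hΔ hGR β α = Csix hΔ hGR α β := csix_swap hΔ hGR α β
      have cAG : Csix hΔ hGR α (α + β) = Csix hΔ hGR α β := csix_rot hΔ hGR α β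
      have cGA : Csix hΔ hGR (α + β) α = Csix hΔ hGR α β := by
        rw [← cAG]; exact csix_swap hΔ hGR α (α + β)
      have cBG : Csix hΔ hGR β (α + β) = Csix hΔ hGR α β := by
        have := csix_rot hΔ hGR β α
        rw [add_comm β α] at this
        rw [this]; exact cswap
      have cGB : Csix hΔ hGR (α + β) β = Csix hΔ hGR α β := by
        rw [← cBG]; exact csix_swap hΔ hGR β (α + β)
      have hfilter : D.filter (fun p => Csix hΔ hGR p.1 p.2 = Csix hΔ hGR α β) =
          ({(α, β), (β, α), (α, α + β), (α + β, α), (β, α + β), (α + β, β)} :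
            Finset (Fq R × Fq R)) := by
        ext ⟨c1, c2⟩
        simp only [Finset.mem_filter, Finset.mem_insert, Finset.mem_singleton,
          Prod.mk.injEq]
        constructor
        · rintro ⟨hpD', hcell⟩
          obtain ⟨hc1, hc2, hc12⟩ := (hmemD (c1, c2)).mp hpD'
          have hm1 : eta hGR c1 (sfn hΔ hGR c1 c2) ∈ Csix hΔ hGR α β := by
            rw [← hcell, Csix]
            exact Set.mem_insert _ _
          have hm2 : eta hGR c2 (sfn hΔ hGR c2 c1) ∈ Csix hΔ hGR α β := by
            rw [← hcell, Csix]
            apply Set.mem_insert_of_mem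
            apply Set.mem_insert _
          have hcol1 : c1 = α ∨ c1 = β ∨ c1 = α + β := by
            rw [mem_csix_iff hΔ hGR] at hm1
            tauto
          have hcol2 : c2 = α ∨ c2 = β ∨ c2 = α + β := by
            rw [mem_csix_iff hΔ hGR] at hm2
            tauto
          rcases hcol1 with rfl | rfl | rfl <;> rcases hcol2 with rfl | rfl | rfl <;>
            tauto
        · rintro (⟨rfl, rfl⟩ | ⟨rfl, rfl⟩ | ⟨rfl, rfl⟩ | ⟨rfl, rfl⟩ | ⟨rfl, rfl⟩ |
            ⟨rfl, rfl⟩)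
          · exact ⟨(hmemD _).mpr ⟨hα, hβ, hAB⟩, rfl⟩
          · exact ⟨(hmemD _).mpr ⟨hβ, hα, hBA⟩, cswap⟩
          · exact ⟨(hmemD _).mpr ⟨hα, hγ0, hAG⟩, cAG⟩
          · exact ⟨(hmemD _).mpr ⟨hγ0, hα, hGA⟩, cGA⟩
          · exact ⟨(hmemD _).mpr ⟨hβ, hγ0, hBG⟩, cBG⟩
          · exact ⟨(hmemD _).mpr ⟨hγ0, hβ, hGB⟩, cGB⟩
      rw [hfilter]
      rw [Finset.card_insert_of_notMem (by simp [hAB, hBA, hAG, hBG, hGA, hGB]),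
        Finset.card_insert_of_notMem (by simp [hAB, hBA, hAG, hBG, hGA, hGB]),
        Finset.card_insert_of_notMem (by simp [hAB, hBA, hAG, hBG, hGA, hGB]),
        Finset.card_insert_of_notMem (by simp [hAB, hBA, hAG, hBG, hGA, hGB]),
        Finset.card_insert_of_notMem (by simp [hAB, hBA, hAG, hBG, hGA, hGB])]
      rw [Finset.card_singleton]
    have hcount : D.card = PsixF.card * 6 := by
      rw [Finset.card_eq_sum_card_fiberwise
        (f := fun p => Csix hΔ hGR p.1 p.2) (t := PsixF)
        (fun p hp => Finset.mem_image_of_mem _ hp)]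
      rw [Finset.sum_congr rfl hfib, Finset.sum_const, smul_eq_mul]
    have hDcard : D.card = (2 ^ Δ - 1) * (2 ^ Δ - 2) := by
      have htot := Finset.card_filter_add_card_filter_not
        (s := S1 ×ˢ S1) (p := fun p => p.1 = p.2)
      have hprod : (S1 ×ˢ S1).card = (2 ^ Δ - 1) * (2 ^ Δ - 1) := by
        rw [Finset.card_product, hS1card]
      have hdiag : ((S1 ×ˢ S1).filter (fun p => p.1 = p.2)).card = 2 ^ Δ - 1 := by
        have himg : (S1 ×ˢ S1).filter (fun p => p.1 = p.2) =
            S1.image (fun a => (a, a)) := by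
          ext ⟨a, b⟩
          simp only [Finset.mem_filter, Finset.mem_product, Finset.mem_image,
            Prod.mk.injEq]
          constructor
          · rintro ⟨⟨ha, -⟩, h⟩; exact ⟨a, ha, rfl, h⟩
          · rintro ⟨c, hc, rfl, rfl⟩; exact ⟨⟨hc, hc⟩, rfl⟩
        rw [himg, Finset.card_image_of_injective _
          (fun a b h => congrArg Prod.fst h), hS1card]
      have hm2 : 2 ≤ 2 ^ Δ := by
        calc 2 = 2 ^ 1 := by norm_num
        _ ≤ 2 ^ Δ := Nat.pow_le_pow_right (by norm_num) hΔ.le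
      have harith : (2 ^ Δ - 1) * (2 ^ Δ - 2) + (2 ^ Δ - 1) =
          (2 ^ Δ - 1) * (2 ^ Δ - 1) := by
        have h1 : 2 ^ Δ - 1 = (2 ^ Δ - 2) + 1 := by omega
        rw [h1]; ring
      have hDne : D.card = ((S1 ×ˢ S1).filter (fun p => ¬(p.1 = p.2))).card := rfl
      rw [hDne]
      omega
    rw [hseteq, Set.ncard_coe_finset]
    have h6 : (2 ^ Δ - 1) * (2 ^ Δ - 2) = PsixF.card * 6 := by rw [← hDcard, hcount]
    rw [h6, Nat.mul_div_cancel _ (by norm_num)]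
  · -- invariance
    intro x hx hx0 C hC
    have hlam : rh x ≠ 0 := by
      intro h
      exact hx0 (rh_inj_T hGR hx T_zero (by rw [h, map_zero]))
    rcases (hmemP C).mp hC with ⟨α, hα, rfl⟩ | ⟨α, β, hα, hβ, hne, rfl⟩
    · rw [ctri_scale hGR hx α]
      exact (hmemP _).mpr (Or.inl ⟨rh x * α, mul_ne_zero hlam hα, rfl⟩)
    · rw [csix_scale hΔ hGR hx α β]
      exact (hmemP _).mpr (Or.inr ⟨rh x * α, rh x * β, mul_ne_zero hlam hα,
        mul_ne_zero hlam hβ, fun h => hne (mul_left_cancel₀ hlam h), rfl⟩)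
end
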